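/- arXiv:cs/0605019 — 3 statements merged into one kernel-verified Lean document; each statement's English description precedes it below -/
import Mathlib

section
/- The exponential generating function p(x) = Σ_{n≥1} n^{n-1} x^n/n! of labeled rooted trees satisfies the functional equation p(x) = x·exp(p(x)) as an identity of formal power series. -/
open Nat Real Filter

/-- The exponential generating function of labeled rooted trees. -/
noncomputable def treeSeries : PowerSeries ℚ :=
  PowerSeries.mk fun n => if n = 0 then 0 else (n : ℚ) ^ (n - 1) / n !

/-- The composition `exp ∘ p` for a power series `p` with zero constant coefficient:
its `n`-th coefficient is `∑_{k ≤ n} [x^n] (p^k) / k!`. -/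
noncomputable def expComp (p : PowerSeries ℚ) : PowerSeries ℚ :=
  PowerSeries.mk fun n => ∑ k ∈ Finset.range (n + 1), PowerSeries.coeff (R := ℚ) n (p ^ k) / k !

section AbelStuff
open Polynomial

/-- Abel polynomials `A 0 = 1`, `A n = X (X + n)^(n-1)`. -/
noncomputable def abelPoly : ℕ → Polynomial ℚ
  | 0 => 1
  | (n+1) => X * (X + C ((n : ℚ) + 1)) ^ n

lemma abelPoly_zero : abelPoly 0 = 1 := rfl

lemma abelPoly_succ (n : ℕ) : abelPoly (n+1) = X * (X + C ((n : ℚ) + 1)) ^ n := rfl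

lemma abelPoly_eval_zero (n : ℕ) : (abelPoly n).eval 0 = if n = 0 then 1 else 0 := by
  cases n with
  | zero => simp [abelPoly_zero]
  | succ l => simp [abelPoly_succ]

lemma abelPoly_eval_one (l : ℕ) : (abelPoly (l+1)).eval 1 = ((l : ℚ) + 2) ^ l := by
  simp [abelPoly_succ]
  ring_nf

lemma abelPoly_coeff_zero (n : ℕ) : (abelPoly n).coeff 0 = if n = 0 then 1 else 0 := by
  cases n with
  | zero => simp [abelPoly_zero]
  | succ l => simp [abelPoly_succ, Polynomial.mul_coeff_zero]

lemma derivative_abelPoly (n : ℕ) :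
    derivative (abelPoly (n+1)) = C ((n : ℚ) + 1) * (abelPoly n).comp (X + 1) := by
  cases n with
  | zero => simp [abelPoly_succ, abelPoly_zero]
  | succ l =>
    rw [abelPoly_succ, abelPoly_succ]
    rw [derivative_mul, derivative_pow, derivative_add, derivative_X, derivative_C]
    simp only [Nat.add_sub_cancel, add_zero, mul_one, one_mul]
    rw [mul_comp, pow_comp, add_comp, X_comp, C_comp]
    push_cast
    simp only [map_add, map_one]
    ring

/-- A polynomial over ℚ with zero derivative and zero value at 0 is zero. -/
lemma poly_eq_zero_of (p : Polynomial ℚ) (h : derivative p = 0) (h0 : p.eval 0 = 0) :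
    p = 0 := by
  have hd := Polynomial.natDegree_eq_zero_of_derivative_eq_zero h
  have hp := Polynomial.eq_C_of_natDegree_eq_zero hd
  rw [hp] at h0 ⊢
  simpa using h0

lemma poly_eq_of (p q : Polynomial ℚ) (h : derivative p = derivative q)
    (h0 : p.eval 0 = q.eval 0) : p = q := by
  have := poly_eq_zero_of (p - q) (by rw [derivative_sub, h, sub_self])
    (by rw [eval_sub, h0, sub_self])
  linear_combination this

/-- The key Abel-type identity:
`∑_{j=0}^{m} ((m+1 choose j+1) (j+1)^j) A_{m-j} = (m+1) · A_m(X+1)`. -/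
lemma abel_key (m : ℕ) :
    ∑ j ∈ Finset.range (m+1),
      C ((((m+1).choose (j+1)) : ℚ) * ((j : ℚ)+1) ^ j) * abelPoly (m - j)
      = C ((m : ℚ) + 1) * (abelPoly m).comp (X + 1) := by
  induction m with
  | zero => simp [abelPoly_zero]
  | succ m ih =>
    push_cast
    apply poly_eq_of
    · -- derivatives agree
      have e1 : derivative (∑ j ∈ Finset.range (m+1+1),
          C ((((m+1+1).choose (j+1)) : ℚ) * ((j : ℚ)+1) ^ j) * abelPoly (m+1-j))
          = ∑ j ∈ Finset.range (m+1),
            C (((m : ℚ) + 1 + 1) * ((((m+1).choose (j+1)) : ℚ) * ((j : ℚ)+1) ^ j))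
              * (abelPoly (m-j)).comp (X + 1) := by
        rw [derivative_sum, Finset.sum_range_succ]
        have hz : abelPoly (m+1-(m+1)) = 1 := by
          simp [abelPoly_zero]
        rw [hz]
        simp only [derivative_mul, derivative_C, derivative_one, zero_mul, mul_zero,
          add_zero, zero_add]
        refine Finset.sum_congr rfl fun j hj => ?_
        rw [Finset.mem_range] at hj
        obtain ⟨d, rfl⟩ : ∃ d, m = j + d := ⟨m - j, by omega⟩
        have h1 : j + d + 1 - j = d + 1 := by omega
        have h2 : j + d - j = d := by omega
        rw [h1, h2, derivative_abelPoly, ← mul_assoc, ← map_mul]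
        congr 2
        have h := Nat.choose_mul_succ_eq (j + d + 1) (j + 1)
        have h3 : j + d + 1 + 1 - (j + 1) = d + 1 := by omega
        rw [h3] at h
        have h' : ((j + d + 1).choose (j+1) * (j + d + 1 + 1) : ℚ)
            = ((j + d + 1 + 1).choose (j+1) : ℚ) * (d + 1) := by exact_mod_cast h
        push_cast at h' ⊢
        linear_combination (-(((j:ℚ)+1) ^ j)) * h'
      have e2 : derivative (C ((m : ℚ) + 1 + 1) * (abelPoly (m+1)).comp (X + 1))
          = ∑ j ∈ Finset.range (m+1),
            C (((m : ℚ) + 1 + 1) * ((((m+1).choose (j+1)) : ℚ) * ((j : ℚ)+1) ^ j))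
              * (abelPoly (m-j)).comp (X + 1) := by
        rw [derivative_mul, derivative_C, zero_mul, zero_add, derivative_comp,
          derivative_abelPoly]
        rw [derivative_add, derivative_X, derivative_one, add_zero, one_mul]
        rw [← ih, sum_comp, Finset.mul_sum]
        refine Finset.sum_congr rfl fun j hj => ?_
        rw [mul_comp, C_comp, ← mul_assoc, ← map_mul]
      rw [e1, e2]
    · -- values at 0 agree
      rw [eval_finset_sum, Finset.sum_range_succ]
      have hz : abelPoly (m+1-(m+1)) = 1 := by simp [abelPoly_zero]
      rw [hz]
      have hzero : ∑ j ∈ Finset.range (m+1),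
          (C ((((m+1+1).choose (j+1)) : ℚ) * ((j : ℚ)+1) ^ j) * abelPoly (m+1-j)).eval 0
          = 0 := by
        refine Finset.sum_eq_zero fun j hj => ?_
        rw [Finset.mem_range] at hj
        have h1 : m + 1 - j = (m - j) + 1 := by omega
        rw [h1, eval_mul, abelPoly_eval_zero]
        simp
      rw [hzero, zero_add, eval_mul, eval_C, eval_one, eval_mul, eval_C, eval_comp]
      simp only [eval_add, eval_X, eval_one, zero_add]
      rw [abelPoly_eval_one]
      simp only [Nat.choose_self, Nat.cast_one, one_mul]
      push_cast
      ring

lemma treeSeries_coeff (n : ℕ) :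
    PowerSeries.coeff (R := ℚ) n treeSeries = if n = 0 then 0 else (n : ℚ) ^ (n - 1) / n ! := by
  simp [treeSeries]

lemma treeSeries_constantCoeff : PowerSeries.constantCoeff (R := ℚ) treeSeries = 0 := by
  rw [← PowerSeries.coeff_zero_eq_constantCoeff]
  simp [treeSeries_coeff]

/-- The coefficients of powers of the tree series, in terms of Abel polynomials. -/
lemma coeff_pow_treeSeries (k : ℕ) : ∀ m : ℕ,
    PowerSeries.coeff (R := ℚ) m (treeSeries ^ k) = (k ! : ℚ) / m ! * (abelPoly m).coeff k := by
  induction k with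
  | zero =>
    intro m
    rw [pow_zero, PowerSeries.coeff_one, abelPoly_coeff_zero]
    cases m with
    | zero => simp
    | succ l => simp
  | succ k ih =>
    intro m
    cases m with
    | zero =>
      rw [PowerSeries.coeff_zero_eq_constantCoeff, map_pow, treeSeries_constantCoeff,
        zero_pow (Nat.succ_ne_zero k)]
      rw [abelPoly_zero]
      simp [Polynomial.coeff_one]
    | succ l =>
      have hp : treeSeries ^ (k+1) = treeSeries * treeSeries ^ k := by
        rw [pow_succ, mul_comm]
      rw [hp, PowerSeries.coeff_mul,
        Finset.Nat.sum_antidiagonal_eq_sum_range_succ_mk, Finset.sum_range_succ']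
      simp only [treeSeries_coeff]
      simp only [if_true, zero_mul, add_zero]
      have hstep : ∀ i ∈ Finset.range (l+1),
          (if i + 1 = 0 then (0:ℚ) else ((i + 1 : ℕ) : ℚ) ^ (i + 1 - 1) / (i+1)!)
            * PowerSeries.coeff (R := ℚ) (l + 1 - (i+1)) (treeSeries ^ k)
          = ((i:ℚ)+1) ^ i / (i+1)! * ((k ! : ℚ) / (l-i)! * (abelPoly (l-i)).coeff k) := by
        intro i hi
        rw [Finset.mem_range] at hi
        have h1 : l + 1 - (i + 1) = l - i := by omega
        rw [if_neg (Nat.succ_ne_zero i), h1, ih]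
        push_cast
        norm_num
      rw [Finset.sum_congr rfl hstep]
      -- now compute the RHS coefficient
      have hd : ((abelPoly (l+1)).coeff (k+1)) * ((k:ℚ)+1)
          = ((l:ℚ)+1) * ((abelPoly l).comp (X+1)).coeff k := by
        have := Polynomial.coeff_derivative (abelPoly (l+1)) k
        rw [derivative_abelPoly] at this
        rw [← this, coeff_C_mul]
      have hsum : ((l:ℚ)+1) * ((abelPoly l).comp (X+1)).coeff k
          = ∑ j ∈ Finset.range (l+1),
            (((l+1).choose (j+1)) : ℚ) * ((j : ℚ)+1) ^ j * (abelPoly (l - j)).coeff k := by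
        have := congrArg (fun p => Polynomial.coeff p k) (abel_key l)
        simp only [finset_sum_coeff, coeff_C_mul] at this
        rw [← this]
      -- combine
      have key : (abelPoly (l+1)).coeff (k+1)
          = (1 / ((k:ℚ)+1)) * ∑ j ∈ Finset.range (l+1),
            (((l+1).choose (j+1)) : ℚ) * ((j : ℚ)+1) ^ j * (abelPoly (l - j)).coeff k := by
        rw [← hsum, ← hd]
        field_simp
      rw [key, Finset.mul_sum, Finset.mul_sum]
      refine Finset.sum_congr rfl fun i hi => ?_
      rw [Finset.mem_range] at hi
      have hle : i + 1 ≤ l + 1 := by omega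
      have hsub : l + 1 - (i + 1) = l - i := by omega
      have hchoose : (((l+1).choose (i+1)) : ℚ) = (l+1)! / ((i+1)! * (l-i)!) := by
        rw [Nat.cast_choose ℚ hle, hsub]
      rw [hchoose]
      have h1 : ((i+1)! : ℚ) ≠ 0 := by positivity
      have h2 : ((l-i)! : ℚ) ≠ 0 := by positivity
      have h3 : ((l+1)! : ℚ) ≠ 0 := by positivity
      have h4 : ((k:ℚ)+1) ≠ 0 := by positivity
      have h5 : ((k+1)! : ℚ) = ((k:ℚ)+1) * k ! := by
        rw [Nat.factorial_succ]; push_cast; ring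
      rw [h5]
      field_simp

lemma natDegree_abelPoly_le (m : ℕ) : (abelPoly m).natDegree ≤ m := by
  cases m with
  | zero => simp [abelPoly_zero]
  | succ l =>
    rw [abelPoly_succ]
    refine le_trans (natDegree_mul_le) ?_
    have h1 : (X : ℚ[X]).natDegree ≤ 1 := by simp
    have h2 : ((X + C ((l : ℚ) + 1)) ^ l).natDegree ≤ l := by
      refine le_trans (natDegree_pow_le) ?_
      have : (X + C ((l : ℚ) + 1)).natDegree ≤ 1 :=
        le_of_eq (natDegree_X_add_C _)
      calc l * (X + C ((l : ℚ) + 1)).natDegree ≤ l * 1 := Nat.mul_le_mul_left l this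
        _ = l := mul_one l
    omega

/-- The EGF `p(x) = ∑_{n≥1} n^(n-1) x^n / n!` of labeled rooted trees satisfies the
functional equation `p = x · exp(p)` as formal power series. -/
theorem stmt_3 : treeSeries = PowerSeries.X * expComp treeSeries := by
  ext n
  cases n with
  | zero =>
    rw [treeSeries_coeff, PowerSeries.coeff_zero_eq_constantCoeff, map_mul,
      PowerSeries.constantCoeff_X, zero_mul, if_pos rfl]
  | succ m =>
    rw [PowerSeries.coeff_succ_X_mul, treeSeries_coeff, if_neg (Nat.succ_ne_zero m)]
    simp only [Nat.add_sub_cancel]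
    have hE : PowerSeries.coeff (R := ℚ) m (expComp treeSeries)
        = ∑ k ∈ Finset.range (m+1), PowerSeries.coeff (R := ℚ) m (treeSeries ^ k) / k ! := by
      simp [expComp]
    rw [hE]
    have hterm : ∀ k ∈ Finset.range (m+1),
        PowerSeries.coeff (R := ℚ) m (treeSeries ^ k) / k !
          = (abelPoly m).coeff k * (1:ℚ) ^ k / m ! := by
      intro k _
      rw [coeff_pow_treeSeries]
      have : ((k)! : ℚ) ≠ 0 := by positivity
      field_simp
      ring
    rw [Finset.sum_congr rfl hterm, ← Finset.sum_div, ← Polynomial.eval_eq_sum_range'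
      (Nat.lt_succ_of_le (natDegree_abelPoly_le m))]
    cases m with
    | zero =>
      rw [abelPoly_zero]
      norm_num
    | succ l =>
      rw [abelPoly_eval_one]
      have h1 : ((l+1)! : ℚ) ≠ 0 := by positivity
      have h2 : ((l+1+1)! : ℚ) = ((l:ℚ)+2) * (l+1)! := by
        rw [Nat.factorial_succ]; push_cast; ring
      rw [h2]
      push_cast
      field_simp
      ring
end AbelStuff
end

section
/- The radius of convergence of the power series Σ_{n≥1} n^{n-1} x^n/n! equals 1/e, and the series converges at x = 1/e with sum equal to 1. -/
open Nat Real Filter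

open Finset Topology

/-- Abel polynomial-type sequence: `Bp n x = x * (x + n)^(n-1)`, with `Bp 0 x = 1`. -/
noncomputable def Bp : ℕ → ℝ → ℝ := fun n x => if n = 0 then 1 else x * (x + n) ^ (n - 1)

lemma Bp_zero (x : ℝ) : Bp 0 x = 1 := rfl

lemma Bp_succ (n : ℕ) (x : ℝ) : Bp (n + 1) x = x * (x + (n + 1)) ^ n := by
  simp [Bp]

lemma Bp_apply_zero {n : ℕ} (hn : n ≠ 0) : Bp n 0 = 0 := by
  simp [Bp, hn]

lemma Bp_nonneg {n : ℕ} {x : ℝ} (hx : 0 ≤ x) : 0 ≤ Bp n x := by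
  cases n with
  | zero => norm_num [Bp_zero]
  | succ m => rw [Bp_succ]; positivity

lemma hasDerivAt_Bp (n : ℕ) (x : ℝ) :
    HasDerivAt (fun y => Bp n y) (n * Bp (n - 1) (x + 1)) x := by
  match n with
  | 0 =>
    simp only [Bp_zero, Nat.cast_zero, zero_mul]
    exact hasDerivAt_const x 1
  | 1 =>
    have : (fun y => Bp 1 y) = fun y : ℝ => y := by
      funext y; rw [Bp_succ]; push_cast; ring
    rw [this]
    have : ((1 : ℕ) : ℝ) * Bp (1 - 1) (x + 1) = 1 := by norm_num [Bp_zero]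
    rw [this]; exact hasDerivAt_id x
  | (k + 2) =>
    have h1 : (fun y => Bp (k + 2) y) = fun y : ℝ => y * (y + (k + 2)) ^ (k + 1) := by
      funext y; rw [Bp_succ]; push_cast; ring_nf
    rw [h1]
    have hpow : HasDerivAt (fun y : ℝ => (y + ((k : ℝ) + 2)) ^ (k + 1))
        ((k + 1 : ℕ) * (x + ((k : ℝ) + 2)) ^ k * 1) x := by
      have := ((hasDerivAt_id x).add_const ((k : ℝ) + 2)).fun_pow (k + 1)
      simpa using this
    have := (hasDerivAt_id x).fun_mul hpow
    refine this.congr_deriv ?_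
    simp only [id_eq]
    have h2 : ((k + 2 : ℕ) : ℝ) * Bp (k + 2 - 1) (x + 1) =
        (k + 2 : ℝ) * ((x + 1) * ((x + 1) + (k + 1)) ^ k) := by
      rw [show k + 2 - 1 = k + 1 from rfl, Bp_succ]; push_cast; ring
    rw [h2]
    rw [pow_succ]
    push_cast
    ring

/-- `Bp` is a sequence of binomial type. -/
lemma Bp_add (n : ℕ) : ∀ x y : ℝ,
    ∑ k ∈ range (n + 1), (n.choose k : ℝ) * Bp k x * Bp (n - k) y = Bp n (x + y) := by
  induction n with
  | zero => intro x y; simp [Bp_zero]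
  | succ n ih =>
    intro x y
    -- show the difference is constant in x, and evaluate at x = 0
    set g : ℝ → ℝ := fun x =>
      (∑ k ∈ range (n + 2), ((n + 1).choose k : ℝ) * Bp k x * Bp (n + 1 - k) y)
        - Bp (n + 1) (x + y) with hg
    have hderiv : ∀ x, HasDerivAt g 0 x := by
      intro x
      have hsum : HasDerivAt
          (fun x => ∑ k ∈ range (n + 2), ((n + 1).choose k : ℝ) * Bp k x * Bp (n + 1 - k) y)
          (∑ k ∈ range (n + 2),
            ((n + 1).choose k : ℝ) * ((k : ℝ) * Bp (k - 1) (x + 1)) * Bp (n + 1 - k) y) x := by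
        apply HasDerivAt.fun_sum
        intro k _
        exact (((hasDerivAt_Bp k x).const_mul (((n + 1).choose k : ℝ))).mul_const
          (Bp (n + 1 - k) y))
      have hval : (∑ k ∈ range (n + 2),
            ((n + 1).choose k : ℝ) * ((k : ℝ) * Bp (k - 1) (x + 1)) * Bp (n + 1 - k) y)
          = (n + 1 : ℝ) * Bp n (x + 1 + y) := by
        rw [Finset.sum_range_succ']
        simp only [Nat.cast_zero, zero_mul, mul_zero, add_zero, Nat.succ_sub_succ, Nat.sub_zero]
        have : ∀ k, ((n + 1).choose (k + 1) : ℝ) * (((k + 1 : ℕ) : ℝ) * Bp k (x + 1))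
            * Bp (n - k) y = (n + 1 : ℝ) * ((n.choose k : ℝ) * Bp k (x + 1) * Bp (n - k) y) := by
          intro k
          have hc : ((n + 1).choose (k + 1) : ℝ) * ((k + 1 : ℕ) : ℝ) = (n + 1 : ℝ) * n.choose k := by
            have := Nat.add_one_mul_choose_eq n k
            have : ((n + 1) * n.choose k : ℕ) = ((n + 1).choose (k + 1) * (k + 1) : ℕ) := by
              simpa [Nat.succ_eq_add_one] using this
            exact_mod_cast (congrArg (fun m : ℕ => (m : ℝ)) this).symm
          calc ((n + 1).choose (k + 1) : ℝ) * (((k + 1 : ℕ) : ℝ) * Bp k (x + 1)) * Bp (n - k) y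
              = (((n + 1).choose (k + 1) : ℝ) * ((k + 1 : ℕ) : ℝ)) * Bp k (x + 1) * Bp (n - k) y := by
                ring
            _ = (n + 1 : ℝ) * ((n.choose k : ℝ) * Bp k (x + 1) * Bp (n - k) y) := by rw [hc]; ring
        rw [Finset.sum_congr rfl (fun k _ => this k), ← Finset.mul_sum, ih (x + 1) y]
      have hR : HasDerivAt (fun x => Bp (n + 1) (x + y)) ((n + 1 : ℝ) * Bp n (x + y + 1)) x := by
        have := (hasDerivAt_Bp (n + 1) (x + y)).comp x ((hasDerivAt_id x).add_const y)
        simpa [Function.comp_def] using this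
      have := (hsum.congr_deriv hval).fun_sub hR
      simpa [show x + 1 + y = x + y + 1 by ring] using this
    have hconst : g x = g 0 :=
      is_const_of_deriv_eq_zero (fun x => (hderiv x).differentiableAt)
        (fun x => (hderiv x).deriv) x 0
    have hg0 : g 0 = 0 := by
      rw [hg]
      simp only
      rw [Finset.sum_eq_single 0]
      · simp [Bp_zero]
      · intro k _ hk
        rw [Bp_apply_zero hk]; ring
      · intro h; simp at h
    have := hconst.trans hg0
    rw [hg] at this
    simpa [sub_eq_zero] using this

lemma Bp_div_fact_le {a : ℝ} (ha : 0 ≤ a) (n : ℕ) :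
    Bp n a / n ! ≤ Real.exp a * Real.exp 1 ^ n := by
  have h1 : Bp n a ≤ (a + n) ^ n := by
    cases n with
    | zero => simp [Bp_zero]
    | succ m =>
      rw [Bp_succ, pow_succ]
      push_cast
      have hb : (0 : ℝ) ≤ a + ((m : ℝ) + 1) := by positivity
      calc a * (a + ((m : ℝ) + 1)) ^ m ≤ (a + ((m : ℝ) + 1)) * (a + ((m : ℝ) + 1)) ^ m := by
            apply mul_le_mul_of_nonneg_right (by linarith) (pow_nonneg hb m)
        _ = (a + ((m : ℝ) + 1)) ^ m * (a + ((m : ℝ) + 1)) := by ring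
  have h2 : (a + n) ^ n / n ! ≤ Real.exp (a + n) :=
    Real.pow_div_factorial_le_exp (a + n) (by positivity) n
  have h3 : Real.exp (a + n) = Real.exp a * Real.exp 1 ^ n := by
    rw [Real.exp_add, ← Real.exp_nat_mul]; norm_num
  have hfact : (0 : ℝ) < n ! := by exact_mod_cast Nat.factorial_pos n
  calc Bp n a / n ! ≤ (a + n) ^ n / n ! := by
        gcongr
    _ ≤ Real.exp a * Real.exp 1 ^ n := h3 ▸ h2

lemma summable_abs_pow {c : ℕ → ℝ} {C q : ℝ} (hc : ∀ n, |c n| ≤ C * Real.exp 1 ^ n)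
    (hq : |q| < (Real.exp 1)⁻¹) : Summable fun n => |c n * q ^ n| := by
  have he : (0 : ℝ) < Real.exp 1 := Real.exp_pos 1
  have hq1 : Real.exp 1 * |q| < 1 := by
    have := mul_lt_mul_of_pos_left hq he
    rwa [mul_inv_cancel₀ (ne_of_gt he)] at this
  have h0 : (0 : ℝ) ≤ Real.exp 1 * |q| := by positivity
  apply Summable.of_nonneg_of_le (fun n => abs_nonneg _) (fun n => ?_)
    ((summable_geometric_of_lt_one h0 hq1).mul_left C)
  rw [abs_mul, abs_pow]
  calc |c n| * |q| ^ n ≤ C * Real.exp 1 ^ n * |q| ^ n :=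
        mul_le_mul_of_nonneg_right (hc n) (pow_nonneg (abs_nonneg q) n)
    _ = C * (Real.exp 1 * |q|) ^ n := by rw [mul_pow]; ring

lemma summable_pow {c : ℕ → ℝ} {C q : ℝ} (hc : ∀ n, |c n| ≤ C * Real.exp 1 ^ n)
    (hq : |q| < (Real.exp 1)⁻¹) : Summable fun n => c n * q ^ n :=
  (summable_abs_pow hc hq).of_abs

lemma summable_deriv_aux {c : ℕ → ℝ} {C q : ℝ} (hc : ∀ n, |c n| ≤ C * Real.exp 1 ^ n)
    (hq : |q| < (Real.exp 1)⁻¹) : Summable fun n => c n * ((n : ℝ) * q ^ (n - 1)) := by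
  have he : (0 : ℝ) < Real.exp 1 := Real.exp_pos 1
  have hC : 0 ≤ C := le_trans (abs_nonneg _) (by simpa using hc 0)
  have hq1 : Real.exp 1 * |q| < 1 := by
    have := mul_lt_mul_of_pos_left hq he
    rwa [mul_inv_cancel₀ (ne_of_gt he)] at this
  have h0 : (0 : ℝ) ≤ Real.exp 1 * |q| := by positivity
  have hr1 : ‖Real.exp 1 * |q|‖ < 1 := by rwa [Real.norm_eq_abs, abs_of_nonneg h0]
  apply (summable_nat_add_iff 1).1
  have hsum : Summable fun n : ℕ =>
      (C * Real.exp 1 ^ 2) * (((n : ℝ)) * (Real.exp 1 * |q|) ^ n + 2 * (Real.exp 1 * |q|) ^ n) := by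
    apply Summable.mul_left
    apply Summable.add
    · simpa [pow_one] using summable_pow_mul_geometric_of_norm_lt_one 1 hr1
    · exact (summable_geometric_of_lt_one h0 hq1).mul_left 2
  apply Summable.of_abs
  apply Summable.of_nonneg_of_le (fun n => abs_nonneg _) (fun n => ?_) hsum
  simp only [Nat.add_sub_cancel]
  rw [abs_mul, abs_mul, abs_pow, Nat.cast_add, Nat.cast_one, abs_of_nonneg (by positivity : (0:ℝ) ≤ (n:ℝ) + 1)]
  have he1 : 1 ≤ Real.exp 1 := by have := Real.add_one_le_exp (1 : ℝ); linarith
  have h1 : Real.exp 1 ^ (n + 1) ≤ Real.exp 1 ^ 2 * Real.exp 1 ^ n := by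
    rw [pow_succ, pow_two, mul_comm (Real.exp 1 * Real.exp 1)]
    apply mul_le_mul_of_nonneg_left _ (pow_nonneg he.le n)
    nlinarith
  have hX : (0 : ℝ) ≤ ((n : ℝ) + 1) * |q| ^ n := by positivity
  calc |c (n + 1)| * (((n : ℝ) + 1) * |q| ^ n)
      ≤ C * Real.exp 1 ^ (n + 1) * (((n : ℝ) + 1) * |q| ^ n) := by
        apply mul_le_mul_of_nonneg_right (hc (n + 1)) (by positivity)
    _ ≤ C * (Real.exp 1 ^ 2 * Real.exp 1 ^ n) * (((n : ℝ) + 1) * |q| ^ n) :=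
        mul_le_mul_of_nonneg_right (mul_le_mul_of_nonneg_left h1 hC) hX
    _ = (C * Real.exp 1 ^ 2) * (((n : ℝ) + 1) * (Real.exp 1 ^ n * |q| ^ n)) := by ring
    _ ≤ (C * Real.exp 1 ^ 2) * (((n : ℝ)) * (Real.exp 1 * |q|) ^ n + 2 * (Real.exp 1 * |q|) ^ n) := by
        rw [mul_pow]
        apply mul_le_mul_of_nonneg_left _ (by positivity)
        have hp : (0 : ℝ) ≤ Real.exp 1 ^ n * |q| ^ n := by positivity
        nlinarith

lemma hasDerivAt_tsum_pow {c : ℕ → ℝ} {C : ℝ} (hc : ∀ n, |c n| ≤ C * Real.exp 1 ^ n)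
    {t : ℝ} (ht : |t| < (Real.exp 1)⁻¹) :
    HasDerivAt (fun s => ∑' n, c n * s ^ n) (∑' n, c n * ((n : ℝ) * t ^ (n - 1))) t := by
  have he : (0 : ℝ) < Real.exp 1 := Real.exp_pos 1
  have hC : 0 ≤ C := le_trans (abs_nonneg _) (by simpa using hc 0)
  have hei : (0 : ℝ) < (Real.exp 1)⁻¹ := inv_pos.mpr he
  set r : ℝ := (|t| + (Real.exp 1)⁻¹) / 2 with hrdef
  have hr0 : 0 < r := by rw [hrdef]; positivity
  have htr : |t| < r := by rw [hrdef]; linarith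
  have hre : r < (Real.exp 1)⁻¹ := by rw [hrdef]; linarith
  have her1 : Real.exp 1 * r < 1 := by
    have := mul_lt_mul_of_pos_left hre he
    rwa [mul_inv_cancel₀ (ne_of_gt he)] at this
  have her0 : (0 : ℝ) ≤ Real.exp 1 * r := by positivity
  have her1' : ‖Real.exp 1 * r‖ < 1 := by rwa [Real.norm_eq_abs, abs_of_nonneg her0]
  have hrabs : |r| < (Real.exp 1)⁻¹ := by rwa [abs_of_pos hr0]
  -- the dominating series
  have hu : Summable fun n : ℕ => C * Real.exp 1 ^ (n + 1) * ((n : ℝ) + 1) * r ^ (n - 1) := by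
    apply (summable_nat_add_iff 1).1
    have : Summable fun n : ℕ =>
        (C * Real.exp 1 ^ 2) * (((n : ℝ)) * (Real.exp 1 * r) ^ n + 2 * (Real.exp 1 * r) ^ n) := by
      apply Summable.mul_left
      apply Summable.add
      · simpa [pow_one] using summable_pow_mul_geometric_of_norm_lt_one 1 her1'
      · exact (summable_geometric_of_lt_one her0 her1).mul_left 2
    apply this.of_nonneg_of_le (fun n => by positivity)
    intro n
    simp only [Nat.add_sub_cancel]
    push_cast
    calc C * Real.exp 1 ^ (n + 1 + 1) * ((n : ℝ) + 1 + 1) * r ^ n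
        ≤ C * (Real.exp 1 ^ 2 * Real.exp 1 ^ n) * ((n : ℝ) + 2) * r ^ n := by
          rw [show n + 1 + 1 = n + 2 by ring, pow_add, mul_comm (Real.exp 1 ^ n)]
          apply le_of_eq; push_cast; ring
      _ = (C * Real.exp 1 ^ 2) * (((n : ℝ)) * (Real.exp 1 * r) ^ n + 2 * (Real.exp 1 * r) ^ n) := by
          rw [mul_pow]; ring
  -- uniform convergence of the differentiated partial sums
  have hunif : TendstoUniformlyOn
      (fun (N : ℕ) (x : ℝ) => ∑ k ∈ Finset.range N, c k * ((k : ℝ) * x ^ (k - 1)))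
      (fun x => ∑' n, c n * ((n : ℝ) * x ^ (n - 1))) atTop (Set.Ioo (-r) r) := by
    apply tendstoUniformlyOn_tsum_nat hu
    intro n x hx
    have hxr : |x| ≤ r := le_of_lt (abs_lt.mpr ⟨hx.1, hx.2⟩)
    rw [Real.norm_eq_abs, abs_mul, abs_mul, abs_pow, Nat.abs_cast]
    calc |c n| * ((n : ℝ) * |x| ^ (n - 1))
        ≤ (C * Real.exp 1 ^ n) * ((n : ℝ) * r ^ (n - 1)) := by
          apply mul_le_mul (hc n) _ (by positivity) (by positivity)
          exact mul_le_mul_of_nonneg_left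
            (pow_le_pow_left₀ (abs_nonneg x) hxr (n - 1)) (Nat.cast_nonneg n)
      _ ≤ C * Real.exp 1 ^ (n + 1) * ((n : ℝ) + 1) * r ^ (n - 1) := by
          have h1 : Real.exp 1 ^ n ≤ Real.exp 1 ^ (n + 1) := by
            apply pow_le_pow_right₀ _ (by omega)
            have := Real.add_one_le_exp (1 : ℝ); linarith
          have h2 : (n : ℝ) ≤ (n : ℝ) + 1 := by linarith
          have hrp : (0 : ℝ) ≤ r ^ (n - 1) := by positivity
          have h3 : C * Real.exp 1 ^ n * (n : ℝ) ≤ C * Real.exp 1 ^ (n + 1) * ((n : ℝ) + 1) :=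
            mul_le_mul (mul_le_mul_of_nonneg_left h1 hC) h2 (Nat.cast_nonneg n) (by positivity)
          calc (C * Real.exp 1 ^ n) * ((n : ℝ) * r ^ (n - 1))
              = (C * Real.exp 1 ^ n * (n : ℝ)) * r ^ (n - 1) := by ring
            _ ≤ (C * Real.exp 1 ^ (n + 1) * ((n : ℝ) + 1)) * r ^ (n - 1) :=
                mul_le_mul_of_nonneg_right h3 hrp
  apply hasDerivAt_of_tendstoUniformlyOn isOpen_Ioo hunif
  · apply Filter.Eventually.of_forall
    intro N x _
    apply HasDerivAt.sum
    intro k _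
    exact (hasDerivAt_pow k x).const_mul (c k)
  · intro x hx
    have hxe : |x| < (Real.exp 1)⁻¹ := lt_trans (abs_lt.mpr ⟨hx.1, hx.2⟩) hre
    simpa only [Finset.sum_apply] using (summable_pow hc hxe).hasSum.tendsto_sum_nat
  · exact ⟨neg_lt_of_abs_lt htr, lt_of_abs_lt htr⟩

noncomputable def cB (n : ℕ) : ℝ := Bp n 1 / n !
noncomputable def cB2 (n : ℕ) : ℝ := Bp n 2 / n !

noncomputable def uu (t : ℝ) : ℝ := ∑' n, cB n * t ^ n
noncomputable def ww (t : ℝ) : ℝ := ∑' n, cB2 n * t ^ n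

lemma cB_nonneg (n : ℕ) : 0 ≤ cB n :=
  div_nonneg (Bp_nonneg one_pos.le) (Nat.cast_nonneg _)

lemma cB2_nonneg (n : ℕ) : 0 ≤ cB2 n :=
  div_nonneg (Bp_nonneg two_pos.le) (Nat.cast_nonneg _)

lemma cB_bound (n : ℕ) : |cB n| ≤ Real.exp 2 * Real.exp 1 ^ n := by
  rw [abs_of_nonneg (cB_nonneg n)]
  refine le_trans (Bp_div_fact_le one_pos.le n) ?_
  have h : Real.exp 1 ≤ Real.exp 2 := Real.exp_le_exp.mpr (by norm_num)
  exact mul_le_mul_of_nonneg_right h (pow_nonneg (Real.exp_pos 1).le n)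

lemma cB2_bound (n : ℕ) : |cB2 n| ≤ Real.exp 2 * Real.exp 1 ^ n := by
  rw [abs_of_nonneg (cB2_nonneg n)]
  exact Bp_div_fact_le two_pos.le n

lemma uu_mul_uu {t : ℝ} (ht : |t| < (Real.exp 1)⁻¹) : uu t * uu t = ww t := by
  have hs : Summable fun n => ‖cB n * t ^ n‖ := by
    simpa only [Real.norm_eq_abs] using summable_abs_pow cB_bound ht
  rw [uu, ww, tsum_mul_tsum_eq_tsum_sum_antidiagonal_of_summable_norm hs hs]
  apply tsum_congr
  intro n
  rw [Finset.Nat.sum_antidiagonal_eq_sum_range_succ_mk]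
  have hterm : ∀ k ∈ Finset.range (n + 1),
      (cB k * t ^ k) * (cB (n - k) * t ^ (n - k))
        = ((n.choose k : ℝ) * Bp k 1 * Bp (n - k) 1) * t ^ n / n ! := by
    intro k hk
    have hkn : k ≤ n := Nat.lt_succ_iff.mp (Finset.mem_range.mp hk)
    have hfact : ((n.choose k : ℝ)) * (k ! : ℝ) * ((n - k)! : ℝ) = (n ! : ℝ) := by
      exact_mod_cast congrArg (fun m : ℕ => (m : ℝ)) (Nat.choose_mul_factorial_mul_factorial hkn)
    have hpow : t ^ k * t ^ (n - k) = t ^ n := by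
      rw [← pow_add, Nat.add_sub_cancel' hkn]
    have hk0 : (0 : ℝ) < (k ! : ℝ) := by exact_mod_cast Nat.factorial_pos k
    have hnk0 : (0 : ℝ) < ((n - k)! : ℝ) := by exact_mod_cast Nat.factorial_pos (n - k)
    have hn0 : (0 : ℝ) < (n ! : ℝ) := by exact_mod_cast Nat.factorial_pos n
    have key : (Bp k 1 * Bp (n - k) 1) * t ^ n / ((k ! : ℝ) * ((n - k)! : ℝ))
        = ((n.choose k : ℝ) * Bp k 1 * Bp (n - k) 1) * t ^ n / (n ! : ℝ) := by
      rw [div_eq_div_iff (by positivity : (0:ℝ) < (k ! : ℝ) * ((n - k)! : ℝ)).ne' hn0.ne']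
      linear_combination (-(Bp k 1 * Bp (n - k) 1 * t ^ n)) * hfact
    calc cB k * t ^ k * (cB (n - k) * t ^ (n - k))
        = (Bp k 1 * Bp (n - k) 1) * (t ^ k * t ^ (n - k)) / ((k ! : ℝ) * ((n - k)! : ℝ)) := by
          rw [cB, cB]; ring
      _ = _ := by rw [hpow]; exact key
  rw [Finset.sum_congr rfl hterm, ← Finset.sum_div, ← Finset.sum_mul]
  have hbin : ∑ k ∈ Finset.range (n + 1), (n.choose k : ℝ) * Bp k 1 * Bp (n - k) 1 = Bp n 2 := by
    have := Bp_add n 1 1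
    norm_num at this
    exact this
  rw [hbin, cB2]
  ring

lemma coeff_ode (m : ℕ) : 2 * Bp (m + 1) 1 = ((m : ℝ) + 2) * Bp m 2 := by
  cases m with
  | zero => norm_num [Bp_succ, Bp_zero]
  | succ k =>
    rw [Bp_succ, Bp_succ]
    push_cast
    rw [show (1 : ℝ) + (k + 1 + 1) = (2 : ℝ) + (k + 1) by ring, pow_succ]
    ring

lemma tsum_deriv_cB {t : ℝ} (ht : |t| < (Real.exp 1)⁻¹) :
    ∑' n, cB n * ((n : ℝ) * t ^ (n - 1)) = ∑' m, Bp (m + 1) 1 / m ! * t ^ m := by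
  rw [Summable.tsum_eq_zero_add (summable_deriv_aux cB_bound ht)]
  simp only [Nat.cast_zero, zero_mul, mul_zero, zero_add]
  apply tsum_congr
  intro m
  have hfs : ((m + 1)! : ℝ) = ((m : ℝ) + 1) * (m ! : ℝ) := by
    rw [Nat.factorial_succ]; push_cast; ring
  have hm0 : (m ! : ℝ) ≠ 0 := by exact_mod_cast (Nat.factorial_pos m).ne'
  have hm1 : ((m : ℝ) + 1) ≠ 0 := by positivity
  rw [cB, Nat.add_sub_cancel, hfs]
  push_cast
  field_simp

lemma uu_ode {t : ℝ} (ht : |t| < (Real.exp 1)⁻¹) :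
    (∑' n, cB n * ((n : ℝ) * t ^ (n - 1)))
      = uu t * uu t + t * uu t * (∑' n, cB n * ((n : ℝ) * t ^ (n - 1))) := by
  set v : ℝ := ∑' n, cB n * ((n : ℝ) * t ^ (n - 1)) with hv
  set vw : ℝ := ∑' n, cB2 n * ((n : ℝ) * t ^ (n - 1)) with hvw
  have he : (0 : ℝ) < (Real.exp 1)⁻¹ := inv_pos.mpr (Real.exp_pos 1)
  -- step 1 : 2 * v = 2 * ww t + t * vw
  have h2v : ∀ m : ℕ, 2 * (Bp (m + 1) 1 / m !) * t ^ m
      = 2 * (cB2 m * t ^ m) + t * (cB2 m * ((m : ℝ) * t ^ (m - 1))) := by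
    intro m
    have hco : 2 * (Bp (m + 1) 1 / m !) = 2 * cB2 m + (m : ℝ) * cB2 m := by
      rw [cB2]
      have hm0 : (m ! : ℝ) ≠ 0 := by exact_mod_cast (Nat.factorial_pos m).ne'
      field_simp
      linear_combination t ^ 0 * 0 + coeff_ode m
    have hts : t * ((m : ℝ) * t ^ (m - 1)) = (m : ℝ) * t ^ m := by
      cases m with
      | zero => simp
      | succ k => rw [Nat.add_sub_cancel, pow_succ]; ring
    calc 2 * (Bp (m + 1) 1 / m !) * t ^ m = (2 * cB2 m + (m : ℝ) * cB2 m) * t ^ m := by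
          rw [hco]
      _ = 2 * (cB2 m * t ^ m) + cB2 m * ((m : ℝ) * t ^ m) := by ring
      _ = 2 * (cB2 m * t ^ m) + t * (cB2 m * ((m : ℝ) * t ^ (m - 1))) := by rw [← hts]; ring
  have hsum1 : Summable fun m : ℕ => 2 * (cB2 m * t ^ m) :=
    (summable_pow cB2_bound ht).mul_left 2
  have hsum2 : Summable fun m : ℕ => t * (cB2 m * ((m : ℝ) * t ^ (m - 1))) :=
    (summable_deriv_aux cB2_bound ht).mul_left t
  have step1 : 2 * v = 2 * ww t + t * vw := by
    rw [hv, tsum_deriv_cB ht, ← tsum_mul_left]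
    rw [show (fun m : ℕ => 2 * (Bp (m + 1) 1 / m ! * t ^ m))
        = fun m : ℕ => 2 * (cB2 m * t ^ m) + t * (cB2 m * ((m : ℝ) * t ^ (m - 1))) from
      funext fun m => by rw [← mul_assoc]; exact h2v m]
    rw [Summable.tsum_add hsum1 hsum2, tsum_mul_left, tsum_mul_left, ww, hvw]
  -- step 2 : vw = v * uu t + uu t * v
  have hu' : HasDerivAt uu v t := hasDerivAt_tsum_pow cB_bound ht
  have hw' : HasDerivAt ww vw t := hasDerivAt_tsum_pow cB2_bound ht
  have heq : (fun s => uu s * uu s) =ᶠ[nhds t] ww := by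
    apply Filter.eventuallyEq_of_mem (Ioo_mem_nhds (neg_lt_of_abs_lt ht) (lt_of_abs_lt ht))
    intro s hs
    exact uu_mul_uu (abs_lt.mpr ⟨hs.1, hs.2⟩)
  have hw2 : HasDerivAt ww (v * uu t + uu t * v) t :=
    (hu'.mul hu').congr_of_eventuallyEq heq.symm
  have huniq : vw = v * uu t + uu t * v := hw'.unique hw2
  have hww : ww t = uu t * uu t := (uu_mul_uu ht).symm
  rw [huniq, hww] at step1
  linarith

lemma uu_zero : uu 0 = 1 := by
  rw [uu, tsum_eq_single 0]
  · norm_num [cB, Bp_zero]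
  · intro n hn
    rw [zero_pow hn, mul_zero]

lemma one_le_uu {s : ℝ} (hs0 : 0 ≤ s) (hs : |s| < (Real.exp 1)⁻¹) : 1 ≤ uu s := by
  have h0 : cB 0 * s ^ 0 = 1 := by norm_num [cB, Bp_zero]
  calc (1 : ℝ) = cB 0 * s ^ 0 := h0.symm
    _ ≤ uu s := Summable.le_tsum (summable_pow cB_bound hs) 0
        (fun j _ => mul_nonneg (cB_nonneg j) (pow_nonneg hs0 j))

lemma uu_eq_exp {t : ℝ} (ht0 : 0 ≤ t) (ht : t < (Real.exp 1)⁻¹) :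
    uu t = Real.exp (t * uu t) := by
  have habs : ∀ s, 0 ≤ s → s ≤ t → |s| < (Real.exp 1)⁻¹ := fun s h1 h2 => by
    rw [abs_of_nonneg h1]; linarith
  have hpos : ∀ s, 0 ≤ s → s ≤ t → 0 < uu s := fun s h1 h2 =>
    lt_of_lt_of_le one_pos (one_le_uu h1 (habs s h1 h2))
  set h : ℝ → ℝ := fun s => Real.log (uu s) - s * uu s with hh
  have hderiv : ∀ s, 0 ≤ s → s ≤ t → HasDerivAt h 0 s := by
    intro s h1 h2
    have hs : |s| < (Real.exp 1)⁻¹ := habs s h1 h2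
    have hu' : HasDerivAt uu (∑' n, cB n * ((n : ℝ) * s ^ (n - 1))) s :=
      hasDerivAt_tsum_pow cB_bound hs
    set v : ℝ := ∑' n, cB n * ((n : ℝ) * s ^ (n - 1)) with hvdef
    have hlog : HasDerivAt (fun x => Real.log (uu x)) (v / uu s) s :=
      hu'.log (hpos s h1 h2).ne'
    have hmul : HasDerivAt (fun x => x * uu x) (1 * uu s + s * v) s :=
      (hasDerivAt_id s).mul hu'
    have hsub := hlog.sub hmul
    have hode : v = uu s * uu s + s * uu s * v := uu_ode hs
    have hz : v / uu s - (1 * uu s + s * v) = 0 := by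
      have hne : uu s ≠ 0 := (hpos s h1 h2).ne'
      field_simp
      linear_combination hode
    rw [hz] at hsub
    exact hsub
  have hcont : ContinuousOn h (Set.Icc 0 t) := by
    intro s hs
    exact ((hderiv s hs.1 hs.2).differentiableAt.continuousAt).continuousWithinAt
  have hd : ∀ s ∈ Set.Ico 0 t, HasDerivWithinAt h 0 (Set.Ici s) s := fun s hs =>
    (hderiv s hs.1 hs.2.le).hasDerivWithinAt
  have hconst := constant_of_has_deriv_right_zero hcont hd t (Set.right_mem_Icc.mpr ht0)
  rw [hh] at hconst
  simp only [uu_zero, Real.log_one, mul_zero, zero_mul, sub_zero, mul_one, zero_sub,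
    sub_eq_zero] at hconst
  rw [← hconst, Real.exp_log (hpos t ht0 le_rfl)]

/-- The coefficients of the tree series. -/
noncomputable def aT : ℕ → ℝ := fun n => if n = 0 then 0 else (n : ℝ) ^ (n - 1) / n !

lemma aT_bound (n : ℕ) : |aT n| ≤ 1 * Real.exp 1 ^ n := by
  rw [one_mul]
  cases n with
  | zero =>
    norm_num [aT]
  | succ m =>
    have h1 : (0 : ℝ) ≤ aT (m + 1) := by
      rw [aT]; simp only [Nat.succ_ne_zero, if_false]; positivity
    rw [abs_of_nonneg h1, aT]
    simp only [Nat.succ_ne_zero, if_false]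
    have h2 : ((m + 1 : ℕ) : ℝ) ^ (m + 1 - 1) ≤ ((m + 1 : ℕ) : ℝ) ^ (m + 1) := by
      exact pow_le_pow_right₀
        (by exact_mod_cast Nat.one_le_iff_ne_zero.mpr (Nat.succ_ne_zero m)) (by omega)
    calc ((m + 1 : ℕ) : ℝ) ^ (m + 1 - 1) / (m + 1)!
        ≤ ((m + 1 : ℕ) : ℝ) ^ (m + 1) / (m + 1)! := by
          gcongr
      _ ≤ Real.exp ((m + 1 : ℕ) : ℝ) :=
          Real.pow_div_factorial_le_exp _ (by positivity) (m + 1)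
      _ = Real.exp 1 ^ (m + 1) := by
          rw [← Real.exp_nat_mul]; norm_num

lemma aT_succ_eq (m : ℕ) : aT (m + 1) = Bp m 1 / m ! := by
  rw [aT]
  simp only [Nat.succ_ne_zero, if_false, Nat.add_sub_cancel]
  have hfs : ((m + 1)! : ℝ) = ((m : ℝ) + 1) * (m ! : ℝ) := by
    rw [Nat.factorial_succ]; push_cast; ring
  have hm0 : (m ! : ℝ) ≠ 0 := by exact_mod_cast (Nat.factorial_pos m).ne'
  have hm1 : ((m : ℝ) + 1) ≠ 0 := by positivity
  cases m with
  | zero => norm_num [Bp_zero]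
  | succ k =>
    rw [Bp_succ, hfs]
    push_cast
    rw [show ((k : ℝ) + 1 + 1) ^ (k + 1) = ((k : ℝ) + 1 + 1) ^ k * ((k : ℝ) + 1 + 1) from pow_succ _ _]
    have hb : (1 : ℝ) + ((k : ℝ) + 1) = (k : ℝ) + 1 + 1 := by ring
    field_simp
    rw [hb]

lemma tsum_aT {t : ℝ} (ht : |t| < (Real.exp 1)⁻¹) :
    ∑' n, aT n * t ^ n = t * uu t := by
  rw [Summable.tsum_eq_zero_add (summable_pow aT_bound ht)]
  have h0 : aT 0 * t ^ 0 = 0 := by norm_num [aT]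
  rw [h0, zero_add]
  have hcongr : ∀ m : ℕ, aT (m + 1) * t ^ (m + 1) = (cB m * t ^ m) * t := by
    intro m
    rw [aT_succ_eq, cB, pow_succ]
    ring
  rw [tsum_congr hcongr, tsum_mul_right]
  rw [uu]; ring

lemma stirling_upper : ∀ᶠ n : ℕ in atTop,
    (n ! : ℝ) ≤ 3 * Real.sqrt (2 * n) * ((n : ℝ) / Real.exp 1) ^ n := by
  have h3 : Real.sqrt π < 3 := by
    have h9 : π < 9 := by nlinarith [Real.pi_lt_d2]
    have := Real.sqrt_lt_sqrt Real.pi_pos.le h9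
    rwa [show (9 : ℝ) = 3 ^ 2 by norm_num, Real.sqrt_sq (by norm_num : (0:ℝ) ≤ 3)] at this
  have hev : ∀ᶠ n : ℕ in atTop, Stirling.stirlingSeq n < 3 :=
    Stirling.tendsto_stirlingSeq_sqrt_pi.eventually_lt_const h3
  filter_upwards [hev, eventually_ge_atTop 1] with n hn hn1
  have hden : 0 < Real.sqrt (2 * n) * ((n : ℝ) / Real.exp 1) ^ n := by
    have hn0 : (0 : ℝ) < n := by exact_mod_cast hn1
    positivity
  have := (div_lt_iff₀ hden).mp (by rw [← Stirling.stirlingSeq]; exact hn)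
  calc (n ! : ℝ) ≤ 3 * (Real.sqrt (2 * n) * ((n : ℝ) / Real.exp 1) ^ n) := this.le
    _ = 3 * Real.sqrt (2 * n) * ((n : ℝ) / Real.exp 1) ^ n := by ring

lemma stirling_lower : ∀ᶠ n : ℕ in atTop,
    Real.sqrt (2 * n) * ((n : ℝ) / Real.exp 1) ^ n ≤ (n ! : ℝ) := by
  have h1 : (1 : ℝ) < Real.sqrt π := by
    have := Real.sqrt_lt_sqrt (by norm_num : (0:ℝ) ≤ 1) (by nlinarith [Real.pi_gt_three])
    rwa [Real.sqrt_one] at this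
  have hev : ∀ᶠ n : ℕ in atTop, 1 < Stirling.stirlingSeq n :=
    Stirling.tendsto_stirlingSeq_sqrt_pi.eventually_const_lt h1
  filter_upwards [hev, eventually_ge_atTop 1] with n hn hn1
  have hn0 : (0 : ℝ) < n := by exact_mod_cast hn1
  have hden : 0 < Real.sqrt (2 * n) * ((n : ℝ) / Real.exp 1) ^ n := by positivity
  have h2 : Real.sqrt (2 * n) * ((n : ℝ) / Real.exp 1) ^ n < (n ! : ℝ) := by
    have := (one_lt_div hden).mp (by rw [← Stirling.stirlingSeq]; exact hn)
    exact this
  exact h2.le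

lemma summable_aT_inv_exp : Summable fun n : ℕ => aT n * ((Real.exp 1)⁻¹) ^ n := by
  obtain ⟨N, hN⟩ := (stirling_lower.and (eventually_ge_atTop 1)).exists_forall_of_atTop
  -- key pointwise bound for n ≥ N
  have key : ∀ n, N ≤ n → aT n * ((Real.exp 1)⁻¹) ^ n ≤ (((n : ℝ)) ^ ((3 : ℝ)/2))⁻¹ := by
    intro n hn
    obtain ⟨hlow, hn1⟩ := hN n hn
    have hn0 : (0 : ℝ) < n := by exact_mod_cast hn1
    have he : (0 : ℝ) < Real.exp 1 := Real.exp_pos 1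
    have hfa : (0 : ℝ) < (n ! : ℝ) := by exact_mod_cast Nat.factorial_pos n
    have hrp : (0 : ℝ) < ((n : ℝ)) ^ ((3 : ℝ)/2) := Real.rpow_pos_of_pos hn0 _
    have haT : aT n = (n : ℝ) ^ (n - 1) / n ! := by
      rw [aT]; simp only [Nat.one_le_iff_ne_zero.mp hn1, if_false]
    rw [haT, div_mul_eq_mul_div, div_le_iff₀ hfa, inv_mul_eq_div, le_div_iff₀ hrp]
    -- (n^(n-1) * (e⁻¹)^n) * n^(3/2) ≤ n!  -- after rearrangement
    have hr32 : ((n : ℝ)) ^ ((3 : ℝ)/2) = (n : ℝ) * Real.sqrt n := by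
      rw [show (3 : ℝ)/2 = 1 + 1/2 by norm_num, Real.rpow_add hn0, Real.rpow_one,
        Real.sqrt_eq_rpow]
    have hpow : (n : ℝ) ^ (n - 1) * (n : ℝ) = (n : ℝ) ^ n := by
      rw [← pow_succ]
      congr 1
      omega
    have hsq : Real.sqrt (n : ℝ) ≤ Real.sqrt (2 * n) :=
      Real.sqrt_le_sqrt (by linarith)
    have hdiv : ((n : ℝ) / Real.exp 1) ^ n = (n : ℝ) ^ n * ((Real.exp 1)⁻¹) ^ n := by
      rw [div_pow, div_eq_mul_inv, ← inv_pow]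
    calc (n : ℝ) ^ (n - 1) * ((Real.exp 1)⁻¹) ^ n * ((n : ℝ)) ^ ((3 : ℝ)/2)
        = Real.sqrt n * ((n : ℝ) ^ n * ((Real.exp 1)⁻¹) ^ n) := by
          rw [hr32, ← hpow]; ring
      _ ≤ Real.sqrt (2 * n) * ((n : ℝ) ^ n * ((Real.exp 1)⁻¹) ^ n) := by
          apply mul_le_mul_of_nonneg_right hsq (by positivity)
      _ = Real.sqrt (2 * n) * ((n : ℝ) / Real.exp 1) ^ n := by rw [hdiv]
      _ ≤ (n ! : ℝ) := hlow
  -- conclude summability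
  apply (summable_nat_add_iff N).mp
  have hgs : Summable fun n : ℕ => ((((n + N : ℕ) : ℝ)) ^ ((3 : ℝ)/2))⁻¹ :=
    (summable_nat_add_iff (f := fun n : ℕ => (((n : ℝ)) ^ ((3 : ℝ)/2))⁻¹) N).mpr
      (Real.summable_nat_rpow_inv.mpr (by norm_num))
  refine Summable.of_nonneg_of_le ?_ ?_ hgs
  · intro n
    have h0 : 0 ≤ aT (n + N) := by
      rw [aT]
      split
      · exact le_refl 0
      · positivity
    exact mul_nonneg h0 (by positivity)
  · intro n
    exact key (n + N) (by omega)

lemma not_summable_aT {x : ℝ} (hx : (Real.exp 1)⁻¹ < |x|) :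
    ¬ Summable fun n => aT n * x ^ n := by
  intro hS
  have he : (0 : ℝ) < Real.exp 1 := Real.exp_pos 1
  set r : ℝ := Real.exp 1 * |x| with hrdef
  have hr1 : 1 < r := by
    have := mul_lt_mul_of_pos_left hx he
    rwa [mul_inv_cancel₀ he.ne'] at this
  have hr0 : 0 < r := lt_trans one_pos hr1
  have hrinv : ‖r⁻¹‖ < 1 := by
    rw [Real.norm_eq_abs, abs_of_pos (inv_pos.mpr hr0)]
    exact inv_lt_one_of_one_lt₀ hr1
  have htend : Tendsto (fun n : ℕ => (n : ℝ) ^ 2 * (r⁻¹) ^ n) atTop (𝓝 0) :=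
    (summable_pow_mul_geometric_of_norm_lt_one 2 hrinv).tendsto_atTop_zero
  have hev1 : ∀ᶠ n : ℕ in atTop, (n : ℝ) ^ 2 * (r⁻¹) ^ n < 1/6 :=
    htend.eventually_lt_const (by norm_num)
  have hev2 : ∀ᶠ n : ℕ in atTop, |aT n * x ^ n| < 1 :=
    (summable_abs_iff.mpr hS).tendsto_atTop_zero.eventually_lt_const one_pos
  obtain ⟨n, hup, h6, hlt, hn1⟩ :=
    (stirling_upper.and (hev1.and (hev2.and (eventually_ge_atTop 1)))).exists
  have hn0 : (0 : ℝ) < n := by exact_mod_cast hn1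
  have hfa : (0 : ℝ) < (n ! : ℝ) := by exact_mod_cast Nat.factorial_pos n
  have haT : aT n = (n : ℝ) ^ (n - 1) / n ! := by
    rw [aT]; simp only [Nat.one_le_iff_ne_zero.mp hn1, if_false]
  have habs : |aT n * x ^ n| = (n : ℝ) ^ (n - 1) * |x| ^ n / n ! := by
    rw [abs_mul, abs_pow, haT, abs_of_nonneg (by positivity : (0:ℝ) ≤ (n : ℝ) ^ (n - 1) / n !)]
    ring
  have hm : (n : ℝ) ^ (n - 1) * |x| ^ n ≤ (n ! : ℝ) := by
    rw [habs, div_lt_one hfa] at hlt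
    exact hlt.le
  have hpow : (n : ℝ) ^ (n - 1) * (n : ℝ) = (n : ℝ) ^ n := by
    rw [← pow_succ]
    congr 1
    omega
  have hdiv : ((n : ℝ) / Real.exp 1) ^ n * Real.exp 1 ^ n = (n : ℝ) ^ n := by
    rw [div_pow]
    field_simp
  have hkey : r ^ n * (n : ℝ) ^ (n - 1) ≤ 3 * Real.sqrt (2 * n) * (n : ℝ) * (n : ℝ) ^ (n - 1) := by
    have h1 : (n : ℝ) ^ (n - 1) * |x| ^ n * Real.exp 1 ^ n
        ≤ 3 * Real.sqrt (2 * n) * ((n : ℝ) / Real.exp 1) ^ n * Real.exp 1 ^ n := by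
      apply mul_le_mul_of_nonneg_right (le_trans hm hup) (by positivity)
    calc r ^ n * (n : ℝ) ^ (n - 1)
        = (n : ℝ) ^ (n - 1) * |x| ^ n * Real.exp 1 ^ n := by
          rw [hrdef, mul_pow]; ring
      _ ≤ 3 * Real.sqrt (2 * n) * ((n : ℝ) / Real.exp 1) ^ n * Real.exp 1 ^ n := h1
      _ = 3 * Real.sqrt (2 * n) * (n : ℝ) ^ n := by
          rw [mul_assoc (3 * Real.sqrt (2 * n)), hdiv]
      _ = 3 * Real.sqrt (2 * n) * (n : ℝ) * (n : ℝ) ^ (n - 1) := by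
          rw [← hpow]; ring
  have hkey2 : r ^ n ≤ 3 * Real.sqrt (2 * n) * (n : ℝ) :=
    le_of_mul_le_mul_right (by rw [mul_comm (r ^ n)] at hkey ⊢; exact hkey)
      (by positivity : (0:ℝ) < (n : ℝ) ^ (n - 1))
  have hsq : Real.sqrt (2 * n) ≤ 2 * n := by
    have hn1' : (1 : ℝ) ≤ (n : ℝ) := by exact_mod_cast hn1
    have h1 : (2 * (n : ℝ)) ≤ (2 * (n : ℝ)) ^ 2 := by nlinarith
    have := Real.sqrt_le_sqrt h1
    rwa [Real.sqrt_sq (by positivity)] at this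
  have hkey3 : r ^ n ≤ 6 * (n : ℝ) ^ 2 := by
    calc r ^ n ≤ 3 * Real.sqrt (2 * n) * (n : ℝ) := hkey2
      _ ≤ 3 * (2 * n) * (n : ℝ) := by
          apply mul_le_mul_of_nonneg_right (mul_le_mul_of_nonneg_left hsq (by norm_num)) hn0.le
      _ = 6 * (n : ℝ) ^ 2 := by ring
  have hrn : (0 : ℝ) < r ^ n := by positivity
  have h6' : 6 * (n : ℝ) ^ 2 < r ^ n := by
    rw [inv_pow, mul_inv_lt_iff₀ (by positivity)] at h6
    linarith
  linarith

/-- The radius of convergence of `∑_{n≥1} n^(n-1) x^n / n!` equals `1/e`, and the series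
converges at `x = 1/e` with sum `1`. -/
theorem stmt_5 :
    (∀ x : ℝ, |x| < (Real.exp 1)⁻¹ →
      Summable fun n : ℕ => if n = 0 then (0 : ℝ) else (n : ℝ) ^ (n - 1) * x ^ n / n !) ∧
    (∀ x : ℝ, (Real.exp 1)⁻¹ < |x| →
      ¬ Summable fun n : ℕ => if n = 0 then (0 : ℝ) else (n : ℝ) ^ (n - 1) * x ^ n / n !) ∧
    HasSum (fun n : ℕ =>
      if n = 0 then (0 : ℝ) else (n : ℝ) ^ (n - 1) * ((Real.exp 1)⁻¹) ^ n / n !) 1 := by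
  have he : (0 : ℝ) < Real.exp 1 := Real.exp_pos 1
  have hei : (0 : ℝ) < (Real.exp 1)⁻¹ := inv_pos.mpr he
  have hfun : ∀ x : ℝ, (fun n : ℕ => if n = 0 then (0 : ℝ) else (n : ℝ) ^ (n - 1) * x ^ n / n !)
      = fun n => aT n * x ^ n := by
    intro x
    funext n
    rw [aT]
    split
    · exact (zero_mul _).symm
    · ring
  refine ⟨?_, ?_, ?_⟩
  · intro x hx
    rw [hfun x]
    exact summable_pow aT_bound hx
  · intro x hx
    rw [hfun x]
    exact not_summable_aT hx
  · set S : ℝ := ∑' n, aT n * ((Real.exp 1)⁻¹) ^ n with hSdef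
    have hS_sum : Summable fun n => aT n * ((Real.exp 1)⁻¹) ^ n := summable_aT_inv_exp
    have hAbel : Tendsto (fun y : ℝ => ∑' n, (aT n * ((Real.exp 1)⁻¹) ^ n) * y ^ n)
        (𝓝[<] 1) (𝓝 S) :=
      Real.tendsto_tsum_powerSeries_nhdsWithin_lt hS_sum.hasSum.tendsto_sum_nat
    have hmap : Tendsto (fun t : ℝ => t * Real.exp 1)
        (𝓝[<] (Real.exp 1)⁻¹) (𝓝[<] (1 : ℝ)) := by
      rw [tendsto_nhdsWithin_iff]
      constructor
      · have h1 : Tendsto (fun t : ℝ => t * Real.exp 1) (𝓝 ((Real.exp 1)⁻¹))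
            (𝓝 ((Real.exp 1)⁻¹ * Real.exp 1)) :=
          (continuous_id.mul continuous_const).tendsto _
        rw [inv_mul_cancel₀ he.ne'] at h1
        exact h1.mono_left nhdsWithin_le_nhds
      · filter_upwards [self_mem_nhdsWithin] with t ht
        have : t * Real.exp 1 < (Real.exp 1)⁻¹ * Real.exp 1 :=
          mul_lt_mul_of_pos_right ht he
        rwa [inv_mul_cancel₀ he.ne'] at this
    have hF : Tendsto (fun t : ℝ => ∑' n, aT n * t ^ n) (𝓝[<] (Real.exp 1)⁻¹) (𝓝 S) := by
      apply (hAbel.comp hmap).congr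
      intro t
      simp only [Function.comp_apply]
      apply tsum_congr
      intro n
      have hone : ((Real.exp 1)⁻¹) ^ n * Real.exp 1 ^ n = 1 := by
        rw [← mul_pow, inv_mul_cancel₀ he.ne', one_pow]
      calc (aT n * ((Real.exp 1)⁻¹) ^ n) * (t * Real.exp 1) ^ n
          = aT n * t ^ n * (((Real.exp 1)⁻¹) ^ n * Real.exp 1 ^ n) := by
            rw [mul_pow]; ring
        _ = aT n * t ^ n := by rw [hone, mul_one]
    have hG : Tendsto (fun t : ℝ => t * Real.exp (∑' n, aT n * t ^ n))
        (𝓝[<] (Real.exp 1)⁻¹) (𝓝 ((Real.exp 1)⁻¹ * Real.exp S)) := by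
      apply Tendsto.mul
      · exact tendsto_id.mono_left nhdsWithin_le_nhds
      · exact (Real.continuous_exp.tendsto S).comp hF
    have heq : (fun t : ℝ => ∑' n, aT n * t ^ n)
        =ᶠ[𝓝[<] (Real.exp 1)⁻¹] (fun t : ℝ => t * Real.exp (∑' n, aT n * t ^ n)) := by
      filter_upwards [Ioo_mem_nhdsLT_of_mem (Set.right_mem_Ioc.mpr hei)] with t ht
      have habs : |t| < (Real.exp 1)⁻¹ := by
        rw [abs_of_pos ht.1]; exact ht.2
      rw [tsum_aT habs, ← uu_eq_exp ht.1.le ht.2]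
    have hS_eq : S = (Real.exp 1)⁻¹ * Real.exp S :=
      tendsto_nhds_unique (hF.congr' heq) hG
    have hexp : Real.exp (S - 1) = S := by
      have hS_eq' : S * Real.exp 1 = Real.exp S := by
        conv_lhs => rw [hS_eq]
        field_simp
      rw [Real.exp_sub, div_eq_iff he.ne']
      exact hS_eq'.symm
    have hS1 : S = 1 := by
      by_contra hne
      have h2 := Real.add_one_lt_exp (sub_ne_zero.mpr hne)
      rw [hexp] at h2
      linarith
    rw [hfun ((Real.exp 1)⁻¹)]
    have hfinal := hS_sum.hasSum
    rw [← hSdef, hS1] at hfinal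
    exact hfinal
end

section
/- Let F: ℝ_{≥0} → ℝ be a power series with non-negative coefficients, F(y) = Σ c_k y^k with c_0 > 0 and c_j > 0 for some j ≥ 2, and consider solutions y(x) of y = x·F(y) with y(0)=0 and non-negative Taylor coefficients. If y(x) has finite radius of convergence x_0 and y(x_0) := lim_{x→x_0^-} y(x) is finite and (x_0, y(x_0)) lies strictly inside the region of convergence of (x,y) ↦ x F(y), then 1 − x_0·F'(y(x_0)) = 0. -/
open Finset Filter Topology Set
namespace Stmt14




/-- summability within the radius by comparison -/
lemma psSummable {f : ℕ → ℝ} {R x : ℝ} (hf : ∀ n, 0 ≤ f n) (hx : 0 ≤ x) (hxR : x ≤ R)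
    (hs : Summable fun n => f n * R ^ n) : Summable fun n => f n * x ^ n := by
  refine hs.of_nonneg_of_le (fun n => mul_nonneg (hf n) (pow_nonneg hx n)) (fun n => ?_)
  exact mul_le_mul_of_nonneg_left (pow_le_pow_left₀ hx hxR n) (hf n)

lemma psMono {f : ℕ → ℝ} {R u v : ℝ} (hf : ∀ n, 0 ≤ f n) (hu : 0 ≤ u) (huv : u ≤ v)
    (hvR : v ≤ R) (hs : Summable fun n => f n * R ^ n) :
    (∑' n, f n * u ^ n) ≤ ∑' n, f n * v ^ n := by
  have hv : 0 ≤ v := hu.trans huv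
  refine Summable.tsum_le_tsum (fun n => ?_) (psSummable hf hu (huv.trans hvR) hs)
    (psSummable hf hv hvR hs)
  exact mul_le_mul_of_nonneg_left (pow_le_pow_left₀ hu huv n) (hf n)

lemma psContOn {f : ℕ → ℝ} {R : ℝ} (hf : ∀ n, 0 ≤ f n) (hR : 0 ≤ R)
    (hs : Summable fun n => f n * R ^ n) :
    ContinuousOn (fun x : ℝ => ∑' n, f n * x ^ n) (Icc 0 R) := by
  refine continuousOn_tsum (u := fun n => f n * R ^ n)
    (fun n => (continuous_const.mul (continuous_pow n)).continuousOn) hs ?_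
  intro n x hx
  rw [Real.norm_eq_abs, abs_of_nonneg (mul_nonneg (hf n) (pow_nonneg hx.1 n))]
  exact mul_le_mul_of_nonneg_left (pow_le_pow_left₀ hx.1 hx.2 n) (hf n)

/-- convexity-type bounds for powers -/
lemma pow_sub_pow_bounds {u v : ℝ} (hu : 0 ≤ u) (huv : u ≤ v) (k : ℕ) :
    (k : ℝ) * u ^ (k - 1) * (v - u) ≤ v ^ k - u ^ k ∧
      v ^ k - u ^ k ≤ (k : ℝ) * v ^ (k - 1) * (v - u) := by
  have hv : 0 ≤ v := hu.trans huv
  have key : (∑ i ∈ range k, v ^ i * u ^ (k - 1 - i)) * (v - u) = v ^ k - u ^ k :=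
    geom_sum₂_mul v u k
  have hterm : ∀ i ∈ range k, u ^ (k-1) ≤ v ^ i * u ^ (k - 1 - i) ∧
      v ^ i * u ^ (k - 1 - i) ≤ v ^ (k-1) := by
    intro i hi
    have hik : i ≤ k - 1 := Nat.le_sub_one_of_lt (mem_range.mp hi)
    have hsplit : i + (k - 1 - i) = k - 1 := Nat.add_sub_cancel' hik
    constructor
    · calc u ^ (k-1) = u ^ i * u ^ (k-1-i) := by rw [← pow_add, hsplit]
        _ ≤ v ^ i * u ^ (k-1-i) :=
          mul_le_mul_of_nonneg_right (pow_le_pow_left₀ hu huv i) (pow_nonneg hu _)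
    · calc v ^ i * u ^ (k-1-i) ≤ v ^ i * v ^ (k-1-i) :=
          mul_le_mul_of_nonneg_left (pow_le_pow_left₀ hu huv _) (pow_nonneg hv i)
        _ = v ^ (k-1) := by rw [← pow_add, hsplit]
  have hvu : 0 ≤ v - u := sub_nonneg.mpr huv
  constructor
  · rw [← key]
    refine mul_le_mul_of_nonneg_right ?_ hvu
    calc (k : ℝ) * u ^ (k-1) = ∑ _i ∈ range k, u ^ (k-1) := by
          rw [Finset.sum_const, card_range, nsmul_eq_mul]
      _ ≤ ∑ i ∈ range k, v ^ i * u ^ (k-1-i) := Finset.sum_le_sum (fun i hi => (hterm i hi).1)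
  · rw [← key]
    refine mul_le_mul_of_nonneg_right ?_ hvu
    calc (∑ i ∈ range k, v ^ i * u ^ (k-1-i)) ≤ ∑ _i ∈ range k, v ^ (k-1) :=
          Finset.sum_le_sum (fun i hi => (hterm i hi).2)
      _ = (k : ℝ) * v ^ (k-1) := by rw [Finset.sum_const, card_range, nsmul_eq_mul]



lemma derivSummable {c : ℕ → ℝ} {Y1 t : ℝ} (hc : ∀ k, 0 ≤ c k) (ht : 0 ≤ t) (htY : t < Y1)
    (hs : Summable fun k => c k * Y1 ^ k) :
    Summable fun j : ℕ => ((j : ℝ) + 1) * c (j + 1) * t ^ j := by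
  have hY1 : 0 < Y1 := lt_of_le_of_lt ht htY
  obtain ⟨A, hA⟩ : ∃ A, ∀ k, c k * Y1 ^ k ≤ A := by
    obtain ⟨A, hA⟩ := hs.tendsto_atTop_zero.bddAbove_range
    exact ⟨A, fun k => hA (Set.mem_range_self k)⟩
  set q : ℝ := t / Y1 with hq
  have hq0 : 0 ≤ q := div_nonneg ht hY1.le
  have hq1 : q < 1 := (div_lt_one hY1).mpr htY
  have hsum : Summable fun j : ℕ => A / Y1 * (((j : ℝ) + 1) * q ^ j) := by
    refine Summable.mul_left _ ?_
    have h1 : Summable fun j : ℕ => (j : ℝ) * q ^ j := by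
      simpa using summable_pow_mul_geometric_of_norm_lt_one 1
        (r := q) (by rwa [Real.norm_eq_abs, abs_of_nonneg hq0])
    have h2 : Summable fun j : ℕ => q ^ j := summable_geometric_of_lt_one hq0 hq1
    simpa [add_mul] using h1.add h2
  refine hsum.of_nonneg_of_le (fun j => mul_nonneg (mul_nonneg (by positivity) (hc _)) (pow_nonneg ht j)) (fun j => ?_)
  have hc' : c (j+1) * Y1 ^ (j+1) ≤ A := hA (j+1)
  have hA0 : 0 ≤ A := le_trans (mul_nonneg (hc 0) (by positivity)) (hA 0)
  have hcb : c (j+1) ≤ A / Y1 ^ (j+1) := by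
    rw [le_div_iff₀ (by positivity)]; exact hc'
  calc ((j : ℝ) + 1) * c (j+1) * t ^ j
      ≤ ((j : ℝ) + 1) * (A / Y1 ^ (j+1)) * t ^ j := by
        refine mul_le_mul_of_nonneg_right (mul_le_mul_of_nonneg_left hcb (by positivity))
          (by positivity)
    _ = A / Y1 * (((j : ℝ) + 1) * q ^ j) := by
        rw [hq, div_pow, pow_succ]
        field_simp



lemma shift_summable {f : ℕ → ℝ} {x : ℝ} (hx : 0 < x) (n : ℕ)
    (hs : Summable fun m => f m * x ^ m) : Summable fun m => f (m + n) * x ^ m := by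
  have h1 : Summable fun m => f (m + n) * x ^ (m + n) := (summable_nat_add_iff n).mpr hs
  refine (h1.mul_right (x ^ n)⁻¹).congr fun m => ?_
  have hxn : (x : ℝ) ^ n ≠ 0 := pow_ne_zero n hx.ne'
  field_simp [pow_add]; ring

lemma tail_estimate {f : ℕ → ℝ} {e x : ℝ} (hf : ∀ n, 0 ≤ f n) (hx : 0 < x) (hxe : x ≤ e)
    (hs : Summable fun m => f m * e ^ m) (n : ℕ) :
    f n ≤ (∑' m, f (m + n) * x ^ m) ∧
      (∑' m, f (m + n) * x ^ m) ≤ f n + x * ∑' m, f (m + 1 + n) * e ^ m := by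
  have he : 0 < e := hx.trans_le hxe
  have hsx : Summable fun m => f m * x ^ m :=
    hs.of_nonneg_of_le (fun m => mul_nonneg (hf m) (pow_nonneg hx.le m))
      (fun m => mul_le_mul_of_nonneg_left (pow_le_pow_left₀ hx.le hxe m) (hf m))
  have hsx' : Summable fun m => f (m + n) * x ^ m := shift_summable hx n hsx
  have hse' : Summable fun m => f (m + n) * e ^ m := shift_summable he n hs
  have hsx'' : Summable fun m => f (m + 1 + n) * x ^ (m + 1) := by
    refine ((summable_nat_add_iff 1).mpr hsx').congr fun m => ?_
    congr 2 <;> omega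
  have hse'' : Summable fun m => f (m + 1 + n) * e ^ m := by
    refine (shift_summable he (n + 1) hs).congr fun m => ?_
    congr 2; omega
  have hzero : ∑' m, f (m + n) * x ^ m = f n + ∑' m, f (m + 1 + n) * x ^ (m + 1) := by
    rw [Summable.tsum_eq_zero_add hsx']
    norm_num
  constructor
  · rw [hzero]
    have : 0 ≤ ∑' m, f (m + 1 + n) * x ^ (m + 1) :=
      tsum_nonneg fun m => mul_nonneg (hf _) (pow_nonneg hx.le _)
    linarith
  · rw [hzero]
    have hle : ∑' m, f (m + 1 + n) * x ^ (m + 1) ≤ x * ∑' m, f (m + 1 + n) * e ^ m := by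
      rw [← tsum_mul_left]
      refine Summable.tsum_le_tsum (fun m => ?_) hsx'' (hse''.mul_left x)
      have : f (m + 1 + n) * x ^ (m + 1) = x * (f (m + 1 + n) * x ^ m) := by ring
      rw [this]
      refine mul_le_mul_of_nonneg_left ?_ hx.le
      exact mul_le_mul_of_nonneg_left (pow_le_pow_left₀ hx.le hxe m) (hf _)
    linarith

lemma coeff_unique {a b : ℕ → ℝ} {ε : ℝ} (hε : 0 < ε)
    (hna : ∀ n, 0 ≤ a n) (hnb : ∀ n, 0 ≤ b n)
    (hsa : ∀ x : ℝ, 0 < x → x < ε → Summable fun n => a n * x ^ n)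
    (hsb : ∀ x : ℝ, 0 < x → x < ε → Summable fun n => b n * x ^ n)
    (h : ∀ x : ℝ, 0 < x → x < ε → ∑' n, a n * x ^ n = ∑' n, b n * x ^ n) :
    ∀ n, a n = b n := by
  intro n
  induction n using Nat.strong_induction_on with
  | _ n ih =>
  set e : ℝ := ε / 2 with he_def
  have he : 0 < e := by positivity
  have heε : e < ε := by rw [he_def]; linarith
  have hsae := hsa e he heε
  have hsbe := hsb e he heε
  set Ca : ℝ := ∑' m, a (m + 1 + n) * e ^ m with hCa
  set Cb : ℝ := ∑' m, b (m + 1 + n) * e ^ m with hCb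
  have hCa0 : 0 ≤ Ca := tsum_nonneg fun m => mul_nonneg (hna _) (pow_nonneg he.le _)
  have hCb0 : 0 ≤ Cb := tsum_nonneg fun m => mul_nonneg (hnb _) (pow_nonneg he.le _)
  have key : ∀ x : ℝ, 0 < x → x ≤ e → |a n - b n| ≤ x * (Ca + Cb) := by
    intro x hx hxe
    have hxε : x < ε := lt_of_le_of_lt hxe heε
    -- tails are equal
    have htail : (∑' m, a (m + n) * x ^ m) = ∑' m, b (m + n) * x ^ m := by
      have h1 := Summable.sum_add_tsum_nat_add (f := fun m => a m * x ^ m) n (hsa x hx hxε)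
      have h2 := Summable.sum_add_tsum_nat_add (f := fun m => b m * x ^ m) n (hsb x hx hxε)
      have h3 : ∑ i ∈ range n, a i * x ^ i = ∑ i ∈ range n, b i * x ^ i :=
        Finset.sum_congr rfl fun i hi => by rw [ih i (mem_range.mp hi)]
      have h4 : (∑' m, a (m + n) * x ^ (m + n)) = ∑' m, b (m + n) * x ^ (m + n) := by
        have := h x hx hxε
        linarith [h1, h2]
      have ha' : (∑' m, a (m + n) * x ^ (m + n)) = (∑' m, a (m + n) * x ^ m) * x ^ n := by
        rw [← tsum_mul_right]; exact tsum_congr fun m => by rw [pow_add]; ring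
      have hb' : (∑' m, b (m + n) * x ^ (m + n)) = (∑' m, b (m + n) * x ^ m) * x ^ n := by
        rw [← tsum_mul_right]; exact tsum_congr fun m => by rw [pow_add]; ring
      have hxn : (x : ℝ) ^ n ≠ 0 := pow_ne_zero n hx.ne'
      rw [ha', hb'] at h4
      exact mul_right_cancel₀ hxn h4
    have ea := tail_estimate hna hx hxe hsae n
    have eb := tail_estimate hnb hx hxe hsbe n
    rw [htail] at ea
    rw [abs_le]
    constructor <;> [nlinarith [ea.1, ea.2, eb.1, eb.2]; nlinarith [ea.1, ea.2, eb.1, eb.2]]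
  by_contra hne
  have hd : 0 < |a n - b n| := abs_pos.mpr (sub_ne_zero.mpr hne)
  set x : ℝ := min e (|a n - b n| / (2 * (Ca + Cb + 1))) with hx_def
  have hx : 0 < x := lt_min he (by positivity)
  have hxe : x ≤ e := min_le_left _ _
  have h1 := key x hx hxe
  have h2 : x ≤ |a n - b n| / (2 * (Ca + Cb + 1)) := min_le_right _ _
  have : x * (Ca + Cb) < |a n - b n| := by
    calc x * (Ca + Cb) ≤ |a n - b n| / (2 * (Ca + Cb + 1)) * (Ca + Cb) :=
          mul_le_mul_of_nonneg_right h2 (by linarith)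
      _ < |a n - b n| := by
          rw [div_mul_eq_mul_div, div_lt_iff₀ (by linarith)]
          nlinarith
  linarith



noncomputable def convPow (a : ℕ → ℝ) : ℕ → ℕ → ℝ
  | 0 => fun n => if n = 0 then 1 else 0
  | k + 1 => fun n => ∑ p ∈ Finset.HasAntidiagonal.antidiagonal n, convPow a k p.1 * a p.2

lemma convPow_nonneg {a : ℕ → ℝ} (ha : ∀ n, 0 ≤ a n) (k n : ℕ) : 0 ≤ convPow a k n := by
  induction k generalizing n with
  | zero => simp only [convPow]; split <;> norm_num
  | succ k ih =>
    exact Finset.sum_nonneg fun p _ => mul_nonneg (ih p.1) (ha p.2)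

/-- Cauchy product: the convolution powers sum to powers of the power series. -/
lemma convPow_hasSum {a : ℕ → ℝ} {x : ℝ} (ha : ∀ n, 0 ≤ a n) (hx : 0 ≤ x)
    (hs : Summable fun n => a n * x ^ n) (k : ℕ) :
    Summable (fun n => convPow a k n * x ^ n) ∧
      (∑' n, convPow a k n * x ^ n) = (∑' n, a n * x ^ n) ^ k := by
  induction k with
  | zero =>
    constructor
    · apply summable_of_ne_finset_zero (s := {0})
      intro n hn
      simp only [convPow, Finset.mem_singleton] at hn ⊢
      rw [if_neg hn, zero_mul]
    · rw [tsum_eq_single 0 (fun n hn => by simp [convPow, hn])]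
      simp [convPow]
  | succ k ih =>
    have hnf : (fun n => ‖convPow a k n * x ^ n‖) = fun n => convPow a k n * x ^ n := by
      funext n
      exact Real.norm_of_nonneg (mul_nonneg (convPow_nonneg ha k n) (pow_nonneg hx n))
    have hng : (fun n => ‖a n * x ^ n‖) = fun n => a n * x ^ n := by
      funext n; exact Real.norm_of_nonneg (mul_nonneg (ha n) (pow_nonneg hx n))
    have hf : Summable fun n => ‖convPow a k n * x ^ n‖ := by rw [hnf]; exact ih.1
    have hg : Summable fun n => ‖a n * x ^ n‖ := by rw [hng]; exact hs
    have hexp : ∀ n : ℕ, (∑ p ∈ Finset.HasAntidiagonal.antidiagonal n,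
        (convPow a k p.1 * x ^ p.1) * (a p.2 * x ^ p.2)) = convPow a (k+1) n * x ^ n := by
      intro n
      rw [show convPow a (k+1) n = ∑ p ∈ Finset.HasAntidiagonal.antidiagonal n, convPow a k p.1 * a p.2 from rfl,
        Finset.sum_mul]
      refine Finset.sum_congr rfl fun p hp => ?_
      have : p.1 + p.2 = n := Finset.HasAntidiagonal.mem_antidiagonal.mp hp
      rw [← this, pow_add]; ring
    constructor
    · have := summable_norm_sum_mul_antidiagonal_of_summable_norm hf hg
      refine this.of_norm.congr fun n => ?_
      exact hexp n
    · calc (∑' n, convPow a (k+1) n * x ^ n)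
          = ∑' n, ∑ p ∈ Finset.HasAntidiagonal.antidiagonal n,
              (convPow a k p.1 * x ^ p.1) * (a p.2 * x ^ p.2) := (tsum_congr hexp).symm
        _ = (∑' n, convPow a k n * x ^ n) * ∑' n, a n * x ^ n :=
            (tsum_mul_tsum_eq_tsum_sum_antidiagonal_of_summable_norm hf hg).symm
        _ = (∑' n, a n * x ^ n) ^ (k + 1) := by rw [ih.2, ← pow_succ]



lemma triangle_le_prod {u v : ℕ → ℝ} (hu : ∀ n, 0 ≤ u n) (hv : ∀ n, 0 ≤ v n) (N : ℕ) :
    (∑ n ∈ range N, ∑ p ∈ Finset.HasAntidiagonal.antidiagonal n, u p.1 * v p.2) ≤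
      (∑ i ∈ range N, u i) * ∑ j ∈ range N, v j := by
  have hdisj : (↑(range N) : Set ℕ).PairwiseDisjoint (fun n => Finset.HasAntidiagonal.antidiagonal n) := by
    intro m _ n _ hmn
    refine Finset.disjoint_left.mpr fun p hp hp' => ?_
    exact hmn ((Finset.HasAntidiagonal.mem_antidiagonal.mp hp).symm.trans (Finset.HasAntidiagonal.mem_antidiagonal.mp hp'))
  rw [← Finset.sum_biUnion hdisj, Finset.sum_mul_sum, ← Finset.sum_product']
  refine Finset.sum_le_sum_of_subset_of_nonneg ?_ (fun p _ _ => mul_nonneg (hu p.1) (hv p.2))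
  intro p hp
  rw [Finset.mem_biUnion] at hp
  obtain ⟨n, hn, hpn⟩ := hp
  have h := Finset.HasAntidiagonal.mem_antidiagonal.mp hpn
  have hN := Finset.mem_range.mp hn
  rw [Finset.mem_product, Finset.mem_range, Finset.mem_range]
  omega

lemma convPow_partial_le {a : ℕ → ℝ} {x : ℝ} (ha : ∀ n, 0 ≤ a n) (hx : 0 ≤ x) (k N : ℕ) :
    (∑ n ∈ range N, convPow a k n * x ^ n) ≤ (∑ n ∈ range N, a n * x ^ n) ^ k := by
  induction k with
  | zero =>
    simp only [convPow, pow_zero, ite_mul, one_mul, zero_mul]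
    rcases N with _ | N
    · simp
    · rw [Finset.sum_ite_eq' (range (N+1)) 0 (fun n => x ^ n)]
      simp
  | succ k ih =>
    have step : (∑ n ∈ range N, convPow a (k+1) n * x ^ n) =
        ∑ n ∈ range N, ∑ p ∈ Finset.HasAntidiagonal.antidiagonal n,
          (convPow a k p.1 * x ^ p.1) * (a p.2 * x ^ p.2) := by
      refine Finset.sum_congr rfl fun n _ => ?_
      rw [show convPow a (k+1) n = ∑ p ∈ Finset.HasAntidiagonal.antidiagonal n, convPow a k p.1 * a p.2 from rfl,
        Finset.sum_mul]
      refine Finset.sum_congr rfl fun p hp => ?_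
      have : p.1 + p.2 = n := Finset.HasAntidiagonal.mem_antidiagonal.mp hp
      rw [← this, pow_add]; ring
    rw [step]
    calc (∑ n ∈ range N, ∑ p ∈ Finset.HasAntidiagonal.antidiagonal n,
            (convPow a k p.1 * x ^ p.1) * (a p.2 * x ^ p.2))
        ≤ (∑ i ∈ range N, convPow a k i * x ^ i) * ∑ j ∈ range N, a j * x ^ j :=
          triangle_le_prod (fun n => mul_nonneg (convPow_nonneg ha k n) (pow_nonneg hx n))
            (fun n => mul_nonneg (ha n) (pow_nonneg hx n)) N
      _ ≤ (∑ n ∈ range N, a n * x ^ n) ^ k * ∑ j ∈ range N, a j * x ^ j := by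
          refine mul_le_mul_of_nonneg_right ih ?_
          exact Finset.sum_nonneg fun j _ => mul_nonneg (ha j) (pow_nonneg hx j)
      _ = (∑ n ∈ range N, a n * x ^ n) ^ (k + 1) := by rw [← pow_succ]

end Stmt14
set_option maxHeartbeats 2000000 in
/-- Characteristic equation at the dominant singularity: let `F(y) = ∑ c_k y^k` have
non-negative coefficients with `c_0 > 0` and `c_j > 0` for some `j ≥ 2`, and let
`y(x) = ∑ a_n x^n` (non-negative coefficients, `a_0 = 0`) solve `y = x·F(y)` on `[0, x0)`,
where `x0` is the radius of convergence. If `Y0 = y(x0)` is finite and lies strictly inside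
the region of convergence of `F`, then `1 - x0·F'(Y0) = 0`. -/
theorem stmt_14 (c a : ℕ → ℝ) (x0 Y0 : ℝ)
    (hc : ∀ k, 0 ≤ c k) (hc0 : 0 < c 0) (hcj : ∃ j, 2 ≤ j ∧ 0 < c j)
    (ha : ∀ n, 0 ≤ a n) (ha0 : a 0 = 0) (hx0 : 0 < x0)
    (hrad : ∀ x : ℝ, x0 < x → ¬ Summable fun n : ℕ => a n * x ^ n)
    (hsum0 : HasSum (fun n : ℕ => a n * x0 ^ n) Y0)
    (heq : ∀ x : ℝ, 0 ≤ x → x < x0 →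
      (∑' n : ℕ, a n * x ^ n) = x * ∑' k : ℕ, c k * (∑' n : ℕ, a n * x ^ n) ^ k)
    (hin : ∃ Y1 : ℝ, Y0 < Y1 ∧ Summable fun k : ℕ => c k * Y1 ^ k) :
    1 - x0 * ∑' k : ℕ, (k : ℝ) * c k * Y0 ^ (k - 1) = 0 := by
  clear hcj
  obtain ⟨Y1, hY01, hsY1⟩ := hin
  set y : ℝ → ℝ := fun x => ∑' n, a n * x ^ n with hy_def
  set Fs : ℝ → ℝ := fun t => ∑' k, c k * t ^ k with hFs_def
  set g : ℕ → ℝ := fun j => ((j : ℝ) + 1) * c (j + 1) with hg_def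
  set G : ℝ → ℝ := fun t => ∑' j, g j * t ^ j with hG_def
  have hg : ∀ j, 0 ≤ g j := fun j => mul_nonneg (by positivity) (hc _)
  have hsa0 : Summable fun n => a n * x0 ^ n := hsum0.summable
  have hyx0 : y x0 = Y0 := hsum0.tsum_eq
  have hY0 : 0 ≤ Y0 := by
    rw [← hyx0]
    exact tsum_nonneg fun n => mul_nonneg (ha n) (pow_nonneg hx0.le n)
  have hY1 : 0 < Y1 := lt_of_le_of_lt hY0 hY01
  set Ym : ℝ := (Y0 + Y1) / 2 with hYm_def
  have hY0m : Y0 < Ym := by rw [hYm_def]; linarith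
  have hYm1 : Ym < Y1 := by rw [hYm_def]; linarith
  have hYm0 : 0 ≤ Ym := le_of_lt (lt_of_le_of_lt hY0 hY0m)
  -- summability facts
  have hsax : ∀ x : ℝ, 0 ≤ x → x ≤ x0 → Summable fun n => a n * x ^ n :=
    fun x hx hxe => Stmt14.psSummable ha hx hxe hsa0
  have hsct : ∀ t : ℝ, 0 ≤ t → t ≤ Y1 → Summable fun k => c k * t ^ k :=
    fun t ht hte => Stmt14.psSummable hc ht hte hsY1
  have hgsYm : Summable fun j => g j * Ym ^ j :=
    (Stmt14.derivSummable hc hYm0 hYm1 hsY1).congr fun j => rfl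
  have hgst : ∀ t : ℝ, 0 ≤ t → t ≤ Ym → Summable fun j => g j * t ^ j :=
    fun t ht hte => Stmt14.psSummable hg ht hte hgsYm
  -- basic bounds on y
  have hy0 : ∀ x : ℝ, 0 ≤ x → 0 ≤ y x :=
    fun x hx => tsum_nonneg fun n => mul_nonneg (ha n) (pow_nonneg hx n)
  have hymono : ∀ u v : ℝ, 0 ≤ u → u ≤ v → v ≤ x0 → y u ≤ y v :=
    fun u v hu huv hv => Stmt14.psMono ha hu huv hv hsa0
  have hyle : ∀ x : ℝ, 0 ≤ x → x ≤ x0 → y x ≤ Y0 := by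
    intro x hx hxe
    rw [← hyx0]
    exact hymono x x0 hx hxe le_rfl
  -- basic bounds on Fs
  have hFs0 : ∀ t : ℝ, 0 ≤ t → t ≤ Y1 → c 0 ≤ Fs t := by
    intro t ht hte
    have := Summable.le_tsum (hsct t ht hte) 0 (fun j _ => mul_nonneg (hc j) (pow_nonneg ht j))
    simpa using this
  have hFsmono : ∀ u v : ℝ, 0 ≤ u → u ≤ v → v ≤ Y1 → Fs u ≤ Fs v :=
    fun u v hu huv hv => Stmt14.psMono hc hu huv hv hsY1
  -- continuity
  have hycont : ContinuousOn y (Set.Icc 0 x0) := Stmt14.psContOn ha hx0.le hsa0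
  have hFscont : ContinuousOn Fs (Set.Icc 0 Y1) := Stmt14.psContOn hc hY1.le hsY1
  have hGcont : ContinuousOn G (Set.Icc 0 Ym) := Stmt14.psContOn hg hYm0 hgsYm
  -- the functional equation in terms of y and Fs
  have heq' : ∀ x : ℝ, 0 ≤ x → x < x0 → y x = x * Fs (y x) := fun x hx hxe => heq x hx hxe
  -- convexity bounds
  have hconv : ∀ u v : ℝ, 0 ≤ u → u ≤ v → v ≤ Ym →
      G u * (v - u) ≤ Fs v - Fs u ∧ Fs v - Fs u ≤ G v * (v - u) := by
    intro u v hu huv hv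
    have hvnn : 0 ≤ v := hu.trans huv
    have hv1 : v ≤ Y1 := hv.trans hYm1.le
    have hsu : Summable fun k => c k * u ^ k := hsct u hu (huv.trans hv1)
    have hsv : Summable fun k => c k * v ^ k := hsct v hvnn hv1
    have hsub : Fs v - Fs u = ∑' j, c (j+1) * (v ^ (j+1) - u ^ (j+1)) := by
      have h1 : Fs v - Fs u = ∑' k, (c k * v ^ k - c k * u ^ k) := (Summable.tsum_sub hsv hsu).symm
      rw [h1, Summable.tsum_eq_zero_add (hsv.sub hsu)]
      have h0 : c 0 * v ^ 0 - c 0 * u ^ 0 = 0 := by ring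
      rw [h0, zero_add]
      exact tsum_congr fun j => by ring
    have hsd : Summable fun j => c (j+1) * (v ^ (j+1) - u ^ (j+1)) := by
      have := ((summable_nat_add_iff 1).mpr hsv).sub ((summable_nat_add_iff 1).mpr hsu)
      exact this.congr fun j => by ring
    constructor
    · rw [hsub]
      have hlhs : G u * (v - u) = ∑' j, g j * u ^ j * (v - u) := tsum_mul_right.symm
      rw [hlhs]
      refine Summable.tsum_le_tsum (fun j => ?_) ((hgst u hu (huv.trans hv)).mul_right _) hsd
      have hb := (Stmt14.pow_sub_pow_bounds hu huv (j+1)).1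
      rw [Nat.add_sub_cancel] at hb
      push_cast at hb
      calc g j * u ^ j * (v - u) = ((j:ℝ)+1) * u ^ j * (v - u) * c (j+1) := by
            simp only [hg_def]; ring
        _ ≤ (v ^ (j+1) - u ^ (j+1)) * c (j+1) := mul_le_mul_of_nonneg_right hb (hc _)
        _ = c (j+1) * (v ^ (j+1) - u ^ (j+1)) := by ring
    · rw [hsub]
      have hlhs : G v * (v - u) = ∑' j, g j * v ^ j * (v - u) := tsum_mul_right.symm
      rw [hlhs]
      refine Summable.tsum_le_tsum (fun j => ?_) hsd ((hgst v hvnn hv).mul_right _)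
      have hb := (Stmt14.pow_sub_pow_bounds hu huv (j+1)).2
      rw [Nat.add_sub_cancel] at hb
      push_cast at hb
      calc c (j+1) * (v ^ (j+1) - u ^ (j+1)) = (v ^ (j+1) - u ^ (j+1)) * c (j+1) := by ring
        _ ≤ ((j:ℝ)+1) * v ^ j * (v - u) * c (j+1) := mul_le_mul_of_nonneg_right hb (hc _)
        _ = g j * v ^ j * (v - u) := by simp only [hg_def]; ring
  -- Part A : the equation extends to x0
  have hmem : x0 ∈ Set.Icc (0:ℝ) x0 := ⟨hx0.le, le_rfl⟩
  have hne : (nhdsWithin x0 (Set.Ioo 0 x0)).NeBot := by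
    rw [nhdsWithin_Ioo_eq_nhdsLT hx0]; infer_instance
  have hsubI : Set.Ioo (0:ℝ) x0 ⊆ Set.Icc 0 x0 := Set.Ioo_subset_Icc_self
  have hYeq : Y0 = x0 * Fs Y0 := by
    have hmapsTo : Set.MapsTo y (Set.Icc 0 x0) (Set.Icc 0 Y1) := fun x hx =>
      ⟨hy0 x hx.1, (hyle x hx.1 hx.2).trans hY01.le⟩
    have hPhicont : ContinuousOn (fun x => x * Fs (y x)) (Set.Icc 0 x0) :=
      continuousOn_id.mul (hFscont.comp hycont hmapsTo)
    have h1 : Filter.Tendsto y (nhdsWithin x0 (Set.Ioo 0 x0)) (nhds (y x0)) :=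
      (hycont x0 hmem).mono_left (nhdsWithin_mono _ hsubI)
    have h2 : Filter.Tendsto (fun x => x * Fs (y x)) (nhdsWithin x0 (Set.Ioo 0 x0))
        (nhds (x0 * Fs (y x0))) :=
      (hPhicont x0 hmem).mono_left (nhdsWithin_mono _ hsubI)
    have h3 : Filter.Tendsto y (nhdsWithin x0 (Set.Ioo 0 x0)) (nhds (x0 * Fs (y x0))) := by
      refine h2.congr' ?_
      filter_upwards [self_mem_nhdsWithin] with x hx
      exact (heq' x hx.1.le hx.2).symm
    have h4 := tendsto_nhds_unique h1 h3
    rw [hyx0] at h4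
    exact h4
  -- Part C : x0 * G Y0 ≤ 1
  have hC : x0 * G Y0 ≤ 1 := by
    have hstep : ∀ x ∈ Set.Ioo (0:ℝ) x0, x * G (y x) ≤ 1 := by
      intro x hx
      set x' := (x + x0)/2 with hx'd
      have hxx' : x < x' := by rw [hx'd]; linarith [hx.2]
      have hx'0 : x' < x0 := by rw [hx'd]; linarith [hx.2]
      have hx'pos : 0 < x' := lt_trans hx.1 hxx'
      have hu0 : 0 ≤ y x := hy0 x hx.1.le
      have huv : y x ≤ y x' := hymono x x' hx.1.le hxx'.le hx'0.le
      have hvm : y x' ≤ Ym := (hyle x' hx'pos.le hx'0.le).trans hY0m.le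
      have hv1 : y x' ≤ Y1 := hvm.trans hYm1.le
      have hequ := heq' x hx.1.le hx.2
      have heqv := heq' x' hx'pos.le hx'0
      have hFsu : c 0 ≤ Fs (y x) := hFs0 _ hu0 (huv.trans hv1)
      have hFsv : c 0 ≤ Fs (y x') := hFs0 _ (hu0.trans huv) hv1
      have hFsuv : Fs (y x) ≤ Fs (y x') := hFsmono _ _ hu0 huv hv1
      have huv' : y x < y x' := by
        calc y x = x * Fs (y x) := hequ
          _ < x' * Fs (y x) := mul_lt_mul_of_pos_right hxx' (lt_of_lt_of_le hc0 hFsu)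
          _ ≤ x' * Fs (y x') := mul_le_mul_of_nonneg_left hFsuv hx'pos.le
          _ = y x' := heqv.symm
      have hlow := (hconv (y x) (y x') hu0 huv hvm).1
      have hkey : x * (Fs (y x') - Fs (y x)) ≤ y x' - y x := by
        have hdiff : y x' - y x = x' * Fs (y x') - x * Fs (y x) := by
          rw [← hequ, ← heqv]
        nlinarith [mul_nonneg (sub_nonneg.mpr hxx'.le) (le_trans hc0.le hFsv)]
      have hchain : x * (G (y x) * (y x' - y x)) ≤ y x' - y x :=
        le_trans (mul_le_mul_of_nonneg_left hlow hx.1.le) hkey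
      nlinarith [hchain, sub_pos.mpr huv']
    have hmapsTo2 : Set.MapsTo y (Set.Icc 0 x0) (Set.Icc 0 Ym) := fun x hx =>
      ⟨hy0 x hx.1, (hyle x hx.1 hx.2).trans hY0m.le⟩
    have hPsicont : ContinuousOn (fun x => x * G (y x)) (Set.Icc 0 x0) :=
      continuousOn_id.mul (hGcont.comp hycont hmapsTo2)
    have h2 : Filter.Tendsto (fun x => x * G (y x)) (nhdsWithin x0 (Set.Ioo 0 x0))
        (nhds (x0 * G (y x0))) :=
      (hPsicont x0 hmem).mono_left (nhdsWithin_mono _ hsubI)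
    rw [hyx0] at h2
    refine le_of_tendsto h2 ?_
    filter_upwards [self_mem_nhdsWithin] with x hx using hstep x hx
  -- Part D : 1 ≤ x0 * G Y0
  have hD : 1 ≤ x0 * G Y0 := by
    by_contra hlt
    push_neg at hlt
    set δ : ℝ := 1 - x0 * G Y0 with hδd
    have hδ : 0 < δ := by rw [hδd]; linarith
    -- choose Y slightly above Y0 where the derivative is still controlled
    obtain ⟨Y, hYmem, hYG⟩ : ∃ Y, Y ∈ Set.Ioc Y0 Ym ∧ G Y < G Y0 + δ / (2 * x0) := by
      have hmemY : Y0 ∈ Set.Icc (0:ℝ) Ym := ⟨hY0, hY0m.le⟩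
      have hcw : Filter.Tendsto G (nhdsWithin Y0 (Set.Ioc Y0 Ym)) (nhds (G Y0)) :=
        (hGcont Y0 hmemY).mono_left
          (nhdsWithin_mono _ (fun t ht => ⟨hY0.trans ht.1.le, ht.2⟩))
      have hneY : (nhdsWithin Y0 (Set.Ioc Y0 Ym)).NeBot := by
        rw [nhdsWithin_Ioc_eq_nhdsGT hY0m]; infer_instance
      have hpos : G Y0 < G Y0 + δ / (2 * x0) := by
        have : 0 < δ / (2 * x0) := by positivity
        linarith
      have hev := hcw.eventually_lt_const hpos
      exact (eventually_mem_nhdsWithin.and hev).exists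
    have hY0Y : Y0 < Y := hYmem.1
    have hYm' : Y ≤ Ym := hYmem.2
    have hYnn : 0 ≤ Y := hY0.trans hY0Y.le
    have hY1' : Y ≤ Y1 := hYm'.trans hYm1.le
    -- x0 * Fs Y < Y
    have hupper := (hconv Y0 Y hY0 hY0Y.le hYm').2
    have hGYle : x0 * G Y ≤ x0 * G Y0 + δ / 2 := by
      have h1 := mul_le_mul_of_nonneg_left hYG.le hx0.le
      have h2 : x0 * (δ / (2 * x0)) = δ / 2 := by field_simp
      nlinarith [h1, h2]
    have hFsY : x0 * Fs Y < Y := by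
      have h1 := mul_le_mul_of_nonneg_left hupper hx0.le
      have h2 := mul_le_mul_of_nonneg_right hGYle (sub_nonneg.mpr hY0Y.le)
      nlinarith [mul_pos hδ (sub_pos.mpr hY0Y)]
    have hFsYpos : 0 < Fs Y := lt_of_lt_of_le hc0 (hFs0 Y hYnn hY1')
    set x1 : ℝ := Y / Fs Y with hx1d
    have hx1 : x0 < x1 := by rw [hx1d, lt_div_iff₀ hFsYpos]; linarith
    have hx1pos : 0 < x1 := lt_trans hx0 hx1
    have hx1Fs : x1 * Fs Y = Y := by rw [hx1d]; field_simp
    -- coefficient machinery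
    set A : ℕ → ℕ → ℝ := Stmt14.convPow a with hA
    have hAnn : ∀ k n, 0 ≤ A k n := fun k n => Stmt14.convPow_nonneg ha k n
    have hconvsum : ∀ x : ℝ, 0 ≤ x → x ≤ x0 → ∀ k,
        Summable (fun n => A k n * x ^ n) ∧ (∑' n, A k n * x ^ n) = (y x) ^ k :=
      fun x hx hxe k => Stmt14.convPow_hasSum ha hx (hsax x hx hxe) k
    set b : ℕ → ℝ := fun n => ∑' k, c k * A k n with hb
    have hbnn : ∀ n, 0 ≤ b n :=
      fun n => tsum_nonneg fun k => mul_nonneg (hc k) (hAnn k n)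
    have hprod : ∀ x : ℝ, 0 < x → x < x0 →
        Summable (Function.uncurry fun k n => c k * (A k n * x ^ n)) := by
      intro x hx hxe
      refine (summable_prod_of_nonneg ?_).mpr ⟨?_, ?_⟩
      · intro p
        exact mul_nonneg (hc _) (mul_nonneg (hAnn _ _) (pow_nonneg hx.le _))
      · intro k
        exact ((hconvsum x hx.le hxe.le k).1).mul_left (c k)
      · refine (hsct (y x) (hy0 x hx.le) ((hyle x hx.le hxe.le).trans hY01.le)).congr
          fun k => ?_
        simp only [Function.uncurry_apply_pair]
        rw [tsum_mul_left, (hconvsum x hx.le hxe.le k).2]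
    have hbk : ∀ n, Summable fun k => c k * A k n := by
      intro n
      have hx : (0:ℝ) < x0/2 := by positivity
      have hxe : x0/2 < x0 := by linarith
      have hinj : Function.Injective (fun k : ℕ => ((k, n) : ℕ × ℕ)) := by
        intro k1 k2 h
        simpa using congrArg Prod.fst h
      have hsl := (hprod (x0/2) hx hxe).comp_injective hinj
      have hxn : ((x0/2 : ℝ) ^ n) ≠ 0 := pow_ne_zero n hx.ne'
      refine (hsl.mul_right ((x0/2) ^ n)⁻¹).congr fun k => ?_
      show (Function.uncurry fun k n => c k * (A k n * (x0/2) ^ n)) (k, n) * ((x0/2)^n)⁻¹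
          = c k * A k n
      simp only [Function.uncurry]
      field_simp
    have hbsum : ∀ x : ℝ, 0 < x → x < x0 →
        Summable (fun n => b n * x ^ n) ∧ y x = x * ∑' n, b n * x ^ n := by
      intro x hx hxe
      have hp := hprod x hx hxe
      have hinner : ∀ n : ℕ, (∑' k, c k * (A k n * x ^ n)) = b n * x ^ n := by
        intro n
        rw [hb]
        rw [← tsum_mul_right]
        exact tsum_congr fun k => (mul_assoc _ _ _).symm
      have hps := hp.prod_symm
      have h2 : Summable fun n => ∑' k, c k * (A k n * x ^ n) := by
        have hnn : (0 : (ℕ × ℕ) → ℝ) ≤ fun p =>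
            (Function.uncurry fun k n => c k * (A k n * x ^ n)) p.swap := by
          intro p
          exact mul_nonneg (hc _) (mul_nonneg (hAnn _ _) (pow_nonneg hx.le _))
        exact ((summable_prod_of_nonneg hnn).mp hps).2
      have hbx : Summable fun n => b n * x ^ n := h2.congr fun n => hinner n
      have hFsyx : Fs (y x) = ∑' n, b n * x ^ n := by
        calc Fs (y x) = ∑' k, c k * (y x) ^ k := rfl
          _ = ∑' k, ∑' n, c k * (A k n * x ^ n) := tsum_congr fun k => by
              rw [tsum_mul_left, (hconvsum x hx.le hxe.le k).2]
          _ = ∑' n, ∑' k, c k * (A k n * x ^ n) := (Summable.tsum_comm hp).symm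
          _ = ∑' n, b n * x ^ n := tsum_congr fun n => hinner n
      exact ⟨hbx, by rw [heq' x hx.le hxe, hFsyx]⟩
    -- shifted coefficients
    set B : ℕ → ℝ := fun n => Nat.rec 0 (fun m _ => b m) n with hB
    have hB0 : B 0 = 0 := rfl
    have hBs : ∀ m, B (m + 1) = b m := fun m => rfl
    have hBnn : ∀ n, 0 ≤ B n := by
      intro n
      cases n with
      | zero => rw [hB0]
      | succ m => rw [hBs]; exact hbnn m
    have hBsum : ∀ x : ℝ, 0 < x → x < x0 → Summable fun n => B n * x ^ n := by
      intro x hx hxe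
      refine (summable_nat_add_iff 1).mp ?_
      refine (((hbsum x hx hxe).1).mul_right x).congr fun n => ?_
      rw [hBs, pow_succ]; ring
    have hBeq : ∀ x : ℝ, 0 < x → x < x0 → y x = ∑' n, B n * x ^ n := by
      intro x hx hxe
      have h2 : (∑' n, B n * x ^ n) = x * ∑' n, b n * x ^ n := by
        rw [Summable.tsum_eq_zero_add (hBsum x hx hxe), hB0, zero_mul, zero_add, ← tsum_mul_left]
        exact tsum_congr fun n => by rw [hBs, pow_succ]; ring
      rw [(hbsum x hx hxe).2, h2]
    have hab : ∀ n, a n = B n :=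
      Stmt14.coeff_unique hx0 ha hBnn (fun x hx hxe => hsax x hx.le hxe.le) hBsum
        (fun x hx hxe => hBeq x hx hxe)
    -- partial sums at x1 are bounded by Y
    have hYc : Summable fun k => c k * Y ^ k := hsct Y hYnn hY1'
    have hpart : ∀ N, ∑ n ∈ Finset.range N, a n * x1 ^ n ≤ Y := by
      intro N
      induction N with
      | zero => simpa using (hY0.trans hY0Y.le)
      | succ N ihN =>
        have hsplit : (∑ n ∈ Finset.range (N+1), a n * x1 ^ n)
            = x1 * ∑ n ∈ Finset.range N, b n * x1 ^ n := by
          rw [Finset.sum_range_succ' (fun n => a n * x1 ^ n) N, ha0, zero_mul, add_zero,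
            Finset.mul_sum]
          refine Finset.sum_congr rfl fun n _ => ?_
          rw [hab (n+1), hBs, pow_succ]; ring
        have hFsYle : (∑ n ∈ Finset.range N, b n * x1 ^ n) ≤ Fs Y := by
          have hterm : ∀ n, b n * x1 ^ n = ∑' k, c k * A k n * x1 ^ n := by
            intro n
            rw [hb, ← tsum_mul_right]
          have hsn : ∀ n ∈ Finset.range N, Summable fun k => c k * A k n * x1 ^ n :=
            fun n _ => (hbk n).mul_right _
          calc (∑ n ∈ Finset.range N, b n * x1 ^ n)
              = ∑ n ∈ Finset.range N, ∑' k, c k * A k n * x1 ^ n :=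
                Finset.sum_congr rfl fun n _ => hterm n
            _ = ∑' k, ∑ n ∈ Finset.range N, c k * A k n * x1 ^ n := (Summable.tsum_finsetSum hsn).symm
            _ ≤ ∑' k, c k * Y ^ k := by
                have hle : ∀ k, (∑ n ∈ Finset.range N, c k * A k n * x1 ^ n) ≤ c k * Y ^ k := by
                  intro k
                  have h1 : (∑ n ∈ Finset.range N, c k * A k n * x1 ^ n)
                      = c k * ∑ n ∈ Finset.range N, A k n * x1 ^ n := by
                    rw [Finset.mul_sum]
                    exact Finset.sum_congr rfl fun n _ => by ring
                  rw [h1]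
                  refine mul_le_mul_of_nonneg_left ?_ (hc k)
                  refine le_trans (Stmt14.convPow_partial_le ha hx1pos.le k N) ?_
                  refine pow_le_pow_left₀ ?_ ihN k
                  exact Finset.sum_nonneg fun n _ =>
                    mul_nonneg (ha n) (pow_nonneg hx1pos.le n)
                refine Summable.tsum_le_tsum hle ?_ hYc
                refine hYc.of_nonneg_of_le (fun k => ?_) hle
                exact Finset.sum_nonneg fun n _ =>
                  mul_nonneg (mul_nonneg (hc k) (hAnn k n)) (pow_nonneg hx1pos.le n)
            _ = Fs Y := rfl
        calc (∑ n ∈ Finset.range (N+1), a n * x1 ^ n)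
            = x1 * ∑ n ∈ Finset.range N, b n * x1 ^ n := hsplit
          _ ≤ x1 * Fs Y := mul_le_mul_of_nonneg_left hFsYle hx1pos.le
          _ = Y := hx1Fs
    have hsumx1 : Summable fun n => a n * x1 ^ n :=
      summable_of_sum_range_le
        (fun n => mul_nonneg (ha n) (pow_nonneg hx1pos.le n)) hpart
    exact hrad x1 hx1 hsumx1
  -- conclusion
  have hGconv : (∑' k : ℕ, (k : ℝ) * c k * Y0 ^ (k - 1)) = G Y0 := by
    have hsW : Summable (fun k : ℕ => (k:ℝ) * c k * Y0 ^ (k-1)) := by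
      refine (summable_nat_add_iff 1).mp ?_
      refine (hgst Y0 hY0 hY0m.le).congr fun j => ?_
      simp only [hg_def, Nat.add_sub_cancel]
      push_cast
      ring
    rw [Summable.tsum_eq_zero_add hsW]
    have h0 : ((0:ℕ):ℝ) * c 0 * Y0 ^ (0-1) = 0 := by norm_num
    rw [h0, zero_add]
    exact tsum_congr fun j => by
      simp only [hg_def, Nat.add_sub_cancel]
      push_cast
      ring
  rw [hGconv]
  linarith
end
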